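/- arXiv:1111.0871 — 7 statements merged into one kernel-verified Lean document; each statement's English description precedes it below -/
import Mathlib

section
/- Let T be a simplicial tree and s an automorphism of T. If e is an oriented edge of T with e ≠ s·e and s acts coherently on e (i.e., e and s·e are consistently oriented, pointing neither toward nor away from each other), then s is hyperbolic (has no fixed point) and both e and s·e lie on the axis of s. -/
namespace Stmt0Aux
open SimpleGraph

variable {V : Type*} {T : SimpleGraph V} {x y a b z w : V}

lemma iso_dist_le (hc : T.Connected) (s : T ≃g T) (x y : V) :
    T.dist (s x) (s y) ≤ T.dist x y := by
  obtain ⟨p, hp⟩ := hc.exists_walk_length_eq_dist x y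
  calc T.dist (s x) (s y) ≤ (p.map s.toHom).length := dist_le _
    _ = p.length := by simp
    _ = T.dist x y := hp

lemma iso_dist (hc : T.Connected) (s : T ≃g T) (x y : V) :
    T.dist (s x) (s y) = T.dist x y :=
  le_antisymm (iso_dist_le hc s x y) (by
    have h := iso_dist_le hc s.symm (s x) (s y)
    simpa using h)

lemma exists_geodesic (hc : T.Connected) (x y : V) :
    ∃ p : T.Walk x y, p.IsPath ∧ p.length = T.dist x y := by
  classical
  obtain ⟨p, hp⟩ := hc.exists_walk_length_eq_dist x y
  refine ⟨p.bypass, p.bypass_isPath, le_antisymm ?_ (dist_le _)⟩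
  exact hp ▸ p.length_bypass_le

lemma dist_add_dist_le (p : T.Walk x y) (ha : a ∈ p.support) :
    T.dist x a + T.dist a y ≤ p.length := by
  classical
  have h := p.take_spec ha
  calc T.dist x a + T.dist a y ≤ (p.takeUntil a ha).length + (p.dropUntil a ha).length :=
        Nat.add_le_add (dist_le _) (dist_le _)
    _ = p.length := by rw [← Walk.length_append, h]

lemma dichotomy (hT : T.IsTree) (hab : T.Adj a b) (z : V) :
    T.dist z b = T.dist z a + 1 ∨ T.dist z a = T.dist z b + 1 := by
  have hc := hT.isConnected
  have hd : T.dist a b = 1 := dist_eq_one_iff_adj.mpr hab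
  have hd' : T.dist b a = 1 := dist_eq_one_iff_adj.mpr hab.symm
  have h1 : T.dist z b ≤ T.dist z a + 1 := by
    have := hc.dist_triangle (u := z) (v := a) (w := b); omega
  have h2 : T.dist z a ≤ T.dist z b + 1 := by
    have := hc.dist_triangle (u := z) (v := b) (w := a); omega
  have hne : T.dist z a ≠ T.dist z b := by
    intro heq
    obtain ⟨p, hp, hpl⟩ := exists_geodesic hc z a
    have hbns : b ∉ p.support := by
      intro hb
      have h3 := dist_add_dist_le p hb
      rw [hpl] at h3
      omega
    have hq1 : (p.concat hab).IsPath := by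
      rw [Walk.isPath_def, Walk.support_concat]
      rw [Walk.isPath_def] at hp
      simp [List.concat_eq_append, List.nodup_append, hp, hbns]
      exact fun x hx hxb => hbns (hxb ▸ hx)
    obtain ⟨q, hq, hql⟩ := exists_geodesic hc z b
    have := hT.IsAcyclic.path_unique ⟨p.concat hab, hq1⟩ ⟨q, hq⟩
    have hlen : (p.concat hab).length = q.length := by
      rw [Subtype.ext_iff] at this
      exact congrArg Walk.length this
    rw [Walk.length_concat, hpl, hql, ← heq] at hlen
    omega
  omega


lemma adj_cross (hT : T.IsTree) (hab : T.Adj a b) (hzw : T.Adj z w)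
    (hz : T.dist z b = T.dist z a + 1) (hw : T.dist w a = T.dist w b + 1) :
    z = a ∧ w = b := by
  classical
  have hc := hT.isConnected
  have hd : T.dist a b = 1 := dist_eq_one_iff_adj.mpr hab
  have hzw1 : T.dist z w = 1 := dist_eq_one_iff_adj.mpr hzw
  have hwz1 : T.dist w z = 1 := dist_eq_one_iff_adj.mpr hzw.symm
  have t1 : T.dist w a ≤ T.dist w z + T.dist z a := hc.dist_triangle
  have t2 : T.dist z b ≤ T.dist z w + T.dist w b := hc.dist_triangle
  have hwb : T.dist w b = T.dist z a := by omega
  have hwa : T.dist w a = T.dist z a + 1 := by omega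
  rcases Nat.eq_zero_or_pos (T.dist z a) with hm | hm
  · have hza : z = a := (hc.dist_eq_zero_iff).mp hm
    have : w = b := (hc.dist_eq_zero_iff).mp (by omega)
    exact ⟨hza, this⟩
  · exfalso
    obtain ⟨p, hp, hpl⟩ := exists_geodesic hc z a
    have hbns : b ∉ p.support := by
      intro hb
      have h3 := dist_add_dist_le p hb
      have hd2 : T.dist b a = 1 := dist_eq_one_iff_adj.mpr hab.symm
      rw [hpl] at h3
      omega
    have hq1 : (p.concat hab).IsPath := by
      rw [Walk.isPath_def, Walk.support_concat]
      rw [Walk.isPath_def] at hp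
      simp [List.concat_eq_append, List.nodup_append, hp, hbns]
      exact fun x hx hxb => hbns (hxb ▸ hx)
    obtain ⟨r, hr, hrl⟩ := exists_geodesic hc w b
    have hznr : z ∉ r.support := by
      intro hzr
      have h3 := dist_add_dist_le r hzr
      rw [hrl] at h3
      omega
    have hq2 : (Walk.cons hzw r).IsPath := hr.cons hznr
    have heqp := hT.IsAcyclic.path_unique ⟨p.concat hab, hq1⟩ ⟨Walk.cons hzw r, hq2⟩
    rw [Subtype.ext_iff] at heqp
    have ha1 : a ∈ (p.concat hab).support := by
      rw [Walk.support_concat]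
      exact List.mem_append.mpr (Or.inl p.end_mem_support)
    have heqp' : p.concat hab = Walk.cons hzw r := heqp
    rw [heqp', Walk.support_cons] at ha1
    rcases List.mem_cons.mp ha1 with ha2 | ha2
    · have : T.dist z a = 0 := by rw [ha2]; simp
      omega
    · have h3 := dist_add_dist_le r ha2
      rw [hrl] at h3
      have hd3 : T.dist a b = 1 := hd
      omega


lemma mem_support_of_sides (hT : T.IsTree) (hab : T.Adj a b) :
    ∀ {x y : V} (p : T.Walk x y), T.dist x b = T.dist x a + 1 →
      T.dist y a = T.dist y b + 1 → a ∈ p.support := by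
  intro x y p
  induction p with
  | nil => intro h1 h2; omega
  | @cons x x' y h q ih =>
    intro h1 h2
    rcases dichotomy hT hab x' with h3 | h3
    · rw [Walk.support_cons]
      exact List.mem_cons_of_mem _ (ih h3 h2)
    · obtain ⟨hxa, -⟩ := adj_cross hT hab h h1 h3
      rw [Walk.support_cons, hxa]
      exact List.mem_cons_self

lemma cross_dist (hT : T.IsTree) (hab : T.Adj a b)
    (hx : T.dist x b = T.dist x a + 1) (hy : T.dist y a = T.dist y b + 1) :
    T.dist x y = T.dist x a + 1 + T.dist y b := by
  have hc := hT.isConnected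
  have hd : T.dist a b = 1 := dist_eq_one_iff_adj.mpr hab
  have hay : T.dist a y = T.dist y b + 1 := by
    rw [SimpleGraph.dist_comm]; exact hy
  apply le_antisymm
  · have t1 : T.dist x y ≤ T.dist x a + T.dist a y := hc.dist_triangle
    omega
  · obtain ⟨p, hp⟩ := hc.exists_walk_length_eq_dist x y
    have hm := mem_support_of_sides hT hab p hx hy
    have h3 := dist_add_dist_le p hm
    rw [hp] at h3
    omega

lemma iter_dist (hc : T.Connected) (s : T ≃g T) (n : ℕ) (x y : V) :
    T.dist ((⇑s)^[n] x) ((⇑s)^[n] y) = T.dist x y := by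
  induction n with
  | zero => simp
  | succ n ih =>
    rw [Function.iterate_succ_apply', Function.iterate_succ_apply',
      iso_dist hc s, ih]

lemma iter_adj (s : T ≃g T) (n : ℕ) (h : T.Adj x y) :
    T.Adj ((⇑s)^[n] x) ((⇑s)^[n] y) := by
  induction n with
  | zero => simpa using h
  | succ n ih =>
    rw [Function.iterate_succ_apply', Function.iterate_succ_apply']
    exact s.map_rel_iff.mpr ih


lemma key (hT : T.IsTree) (s : T ≃g T) (u v : V) (huv : T.Adj u v)
    (hcoh : T.dist u (s v) = T.dist v (s u) + 2) :
    (∀ x : V, s x ≠ x) ∧ (∀ a b : V, T.Adj a b → ¬(s a = b ∧ s b = a)) ∧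
      (∀ y : V, T.dist u (s u) ≤ T.dist y (s y)) ∧ T.dist v (s v) = T.dist u (s u) := by
  have hc := hT.isConnected
  have hduv : T.dist u v = 1 := dist_eq_one_iff_adj.mpr huv
  have hsuv : T.Adj (s u) (s v) := s.map_rel_iff.mpr huv
  have hdsuv : T.dist (s u) (s v) = 1 := dist_eq_one_iff_adj.mpr hsuv
  have hA : T.dist u (s u) = T.dist v (s u) + 1 := by
    have h1 : T.dist u (s u) ≤ T.dist u v + T.dist v (s u) := hc.dist_triangle
    have h2 : T.dist u (s v) ≤ T.dist u (s u) + T.dist (s u) (s v) := hc.dist_triangle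
    omega
  have hB : T.dist v (s v) = T.dist v (s u) + 1 := by
    have h1 : T.dist v (s v) ≤ T.dist v (s u) + T.dist (s u) (s v) := hc.dist_triangle
    have h2 : T.dist u (s v) ≤ T.dist u v + T.dist v (s v) := hc.dist_triangle
    omega
  have Q : ∀ n : ℕ, T.dist u ((⇑s)^[n] u) = n * (T.dist v (s u) + 1) ∧
      T.dist u ((⇑s)^[n] v) = n * (T.dist v (s u) + 1) + 1 := by
    intro n
    induction n with
    | zero => simpa using hduv
    | succ n ih =>
      obtain ⟨ih1, ih2⟩ := ih
      have hab : T.Adj ((⇑s)^[n] u) ((⇑s)^[n] v) := iter_adj s n huv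
      have h1 : T.dist u ((⇑s)^[n] v) = T.dist u ((⇑s)^[n] u) + 1 := by
        rw [ih1, ih2]
      have h2 : T.dist ((⇑s)^[n+1] u) ((⇑s)^[n] u) = T.dist v (s u) + 1 := by
        rw [Function.iterate_succ_apply, iter_dist hc s n, SimpleGraph.dist_comm]
        exact hA
      have h3 : T.dist ((⇑s)^[n+1] u) ((⇑s)^[n] v) = T.dist v (s u) := by
        rw [Function.iterate_succ_apply, iter_dist hc s n, SimpleGraph.dist_comm]
      have h4 : T.dist ((⇑s)^[n+1] v) ((⇑s)^[n] u) = T.dist v (s u) + 2 := by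
        rw [Function.iterate_succ_apply, iter_dist hc s n, SimpleGraph.dist_comm]
        exact hcoh
      have h5 : T.dist ((⇑s)^[n+1] v) ((⇑s)^[n] v) = T.dist v (s u) + 1 := by
        rw [Function.iterate_succ_apply, iter_dist hc s n, SimpleGraph.dist_comm]
        exact hB
      have c1 := cross_dist hT hab h1 (show T.dist ((⇑s)^[n+1] u) ((⇑s)^[n] u) =
        T.dist ((⇑s)^[n+1] u) ((⇑s)^[n] v) + 1 by omega)
      have c2 := cross_dist hT hab h1 (show T.dist ((⇑s)^[n+1] v) ((⇑s)^[n] u) =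
        T.dist ((⇑s)^[n+1] v) ((⇑s)^[n] v) + 1 by omega)
      constructor
      · rw [c1, h3, Nat.succ_mul, ih1]
        ring
      · rw [c2, h5, Nat.succ_mul, ih1]
        ring
  have hmin : ∀ y : V, T.dist u (s u) ≤ T.dist y (s y) := by
    intro y
    rw [hA]
    by_contra hlt
    push_neg at hlt
    have upper : ∀ n : ℕ, T.dist y ((⇑s)^[n] y) ≤ n * T.dist y (s y) := by
      intro n
      induction n with
      | zero => simp
      | succ n ih =>
        have t1 : T.dist y ((⇑s)^[n+1] y) ≤
            T.dist y ((⇑s)^[n] y) + T.dist ((⇑s)^[n] y) ((⇑s)^[n+1] y) := hc.dist_triangle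
        have h2 : T.dist ((⇑s)^[n] y) ((⇑s)^[n+1] y) = T.dist y (s y) := by
          conv_lhs => rw [Function.iterate_succ_apply]
          rw [iter_dist hc s n]
        rw [Nat.succ_mul]
        linarith
    have hlow : ∀ n : ℕ, n * (T.dist v (s u) + 1) ≤ n * T.dist y (s y) + 2 * T.dist u y := by
      intro n
      have t1 : T.dist u ((⇑s)^[n] u) ≤ T.dist u y + T.dist y ((⇑s)^[n] u) := hc.dist_triangle
      have t2 : T.dist y ((⇑s)^[n] u) ≤ T.dist y ((⇑s)^[n] y) + T.dist ((⇑s)^[n] y) ((⇑s)^[n] u) :=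
        hc.dist_triangle
      have h2 : T.dist ((⇑s)^[n] y) ((⇑s)^[n] u) = T.dist u y := by
        rw [iter_dist hc s n, SimpleGraph.dist_comm]
      have h3 := (Q n).1
      have h4 := upper n
      linarith
    have h1 := hlow (2 * T.dist u y + 1)
    have h2 : (2 * T.dist u y + 1) * (T.dist y (s y) + 1) ≤
        (2 * T.dist u y + 1) * (T.dist v (s u) + 1) :=
      Nat.mul_le_mul_left _ (Nat.succ_le_of_lt hlt)
    have h3 : (2 * T.dist u y + 1) * (T.dist y (s y) + 1) =
        (2 * T.dist u y + 1) * T.dist y (s y) + 2 * T.dist u y + 1 := by ring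
    linarith
  refine ⟨?_, ?_, hmin, by omega⟩
  · intro x hx
    have h1 := hmin x
    rw [hx, SimpleGraph.dist_self, hA] at h1
    omega
  · have keydisp : ∀ (a b : V), T.Adj a b → s a = b → s b = a →
        ∀ z : V, T.dist z b = T.dist z a + 1 → T.dist z (s z) = 2 * T.dist z a + 1 := by
      intro a b hab hsa hsb z hz
      have e1 : T.dist (s z) a = T.dist z b := by
        conv_lhs => rw [← hsb]
        rw [iso_dist hc s]
      have e2 : T.dist (s z) b = T.dist z a := by
        conv_lhs => rw [← hsa]
        rw [iso_dist hc s]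
      have h1 : T.dist (s z) a = T.dist (s z) b + 1 := by rw [e1, e2, hz]
      have c := cross_dist hT hab hz h1
      rw [e2] at c
      omega
    rintro a b hab ⟨hsa, hsb⟩
    rcases dichotomy hT hab u with hu | hu <;> rcases dichotomy hT hab v with hv | hv
    · have du := keydisp a b hab hsa hsb u hu
      have dv := keydisp a b hab hsa hsb v hv
      have hne : T.dist u a ≠ T.dist v a := by
        have c1 : T.dist a u = T.dist u a := SimpleGraph.dist_comm
        have c2 : T.dist a v = T.dist v a := SimpleGraph.dist_comm
        rcases dichotomy hT huv a with h | h <;> omega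
      omega
    · obtain ⟨hua, hvb⟩ := adj_cross hT hab huv hu hv
      subst hua
      subst hvb
      rw [hsa, hsb, SimpleGraph.dist_self, SimpleGraph.dist_self] at hcoh
      omega
    · obtain ⟨hva, hub⟩ := adj_cross hT hab huv.symm hv hu
      subst hva
      subst hub
      rw [hsa, hsb, SimpleGraph.dist_self, SimpleGraph.dist_self] at hcoh
      omega
    · have du := keydisp b a hab.symm hsb hsa u hu
      have dv := keydisp b a hab.symm hsb hsa v hv
      have hne : T.dist u b ≠ T.dist v b := by
        have c1 : T.dist b u = T.dist u b := SimpleGraph.dist_comm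
        have c2 : T.dist b v = T.dist v b := SimpleGraph.dist_comm
        rcases dichotomy hT huv b with h | h <;> omega
      omega


lemma symm_dist (hc : T.Connected) (s : T ≃g T) (z : V) :
    T.dist z (s.symm z) = T.dist z (s z) := by
  have h := iso_dist hc s z (s.symm z)
  rw [s.apply_symm_apply] at h
  rw [← h, SimpleGraph.dist_comm]

end Stmt0Aux

open Stmt0Aux in
/-- Let `T` be a simplicial tree and `s` an automorphism of `T`.
If `e = (u,v)` is an oriented edge with `e ≠ s·e` and `s` acts coherently on `e`
(`e` and `s·e` are consistently oriented along the path joining them), then `s`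
is hyperbolic (fixes no vertex and no edge) and both `e` and `s·e` lie on the
axis of `s` (the set of vertices of minimal displacement). -/
theorem stmt0 {V : Type*} (T : SimpleGraph V) (hT : T.IsTree)
    (s : T ≃g T) (u v : V) (huv : T.Adj u v)
    (hne : (u, v) ≠ (s u, s v))
    (hcoh : T.dist u (s v) = T.dist v (s u) + 2 ∨
            T.dist (s u) v = T.dist (s v) u + 2) :
    ((∀ x : V, s x ≠ x) ∧ (∀ a b : V, T.Adj a b → ¬(s a = b ∧ s b = a))) ∧
      ((∀ y : V, T.dist u (s u) ≤ T.dist y (s y)) ∧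
       (∀ y : V, T.dist v (s v) ≤ T.dist y (s y)) ∧
       (∀ y : V, T.dist (s u) (s (s u)) ≤ T.dist y (s y)) ∧
       (∀ y : V, T.dist (s v) (s (s v)) ≤ T.dist y (s y))) := by
  have hc := hT.isConnected
  have main : (∀ x : V, s x ≠ x) ∧ (∀ a b : V, T.Adj a b → ¬(s a = b ∧ s b = a)) ∧
      (∀ y : V, T.dist u (s u) ≤ T.dist y (s y)) ∧ T.dist v (s v) = T.dist u (s u) := by
    rcases hcoh with h | h
    · exact key hT s u v huv h
    · have e1 : T.dist u (s.symm v) = T.dist (s u) v := by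
        have h1 := iso_dist hc s u (s.symm v)
        rw [s.apply_symm_apply] at h1
        exact h1.symm
      have e2 : T.dist v (s.symm u) = T.dist (s v) u := by
        have h1 := iso_dist hc s v (s.symm u)
        rw [s.apply_symm_apply] at h1
        exact h1.symm
      have hcoh' : T.dist u (s.symm v) = T.dist v (s.symm u) + 2 := by rw [e1, e2, h]
      obtain ⟨h1, h2, h3, h4⟩ := key hT s.symm u v huv hcoh'
      refine ⟨?_, ?_, ?_, ?_⟩
      · intro x hx
        have h5 := s.symm_apply_apply x
        rw [hx] at h5
        exact h1 x h5
      · rintro a b hab ⟨ha, hb⟩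
        refine h2 a b hab ⟨?_, ?_⟩
        · rw [← hb]; exact s.symm_apply_apply b
        · rw [← ha]; exact s.symm_apply_apply a
      · intro y
        have h5 := h3 y
        rwa [symm_dist hc s u, symm_dist hc s y] at h5
      · rwa [symm_dist hc s u, symm_dist hc s v] at h4
  obtain ⟨h1, h2, h3, h4⟩ := main
  refine ⟨⟨h1, h2⟩, h3, ?_, ?_, ?_⟩
  · intro y; rw [h4]; exact h3 y
  · intro y
    have h5 : T.dist (s u) (s (s u)) = T.dist u (s u) := iso_dist hc s u (s u)
    rw [h5]; exact h3 y
  · intro y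
    have h5 : T.dist (s v) (s (s v)) = T.dist v (s v) := iso_dist hc s v (s v)
    rw [h5, h4]; exact h3 y
end

section
/- Let G be a group acting cocompactly by simplicial automorphisms on a locally finite simplicial tree T, and let E be an end of T. For any geodesic ray τ representing E, any real number r, and any oriented edge e of T oriented toward E, there exists an element g ∈ G such that g·e is oriented toward E and g·e does not lie in the horoball HB_r(τ). -/
/-- A geodesic ray in a tree: an injective sequence of consecutively adjacent
vertices (in a tree, injectivity of a combinatorial path is equivalent to it
being geodesic). -/
def IsGeodRay {V : Type*} (T : SimpleGraph V) (τ : ℕ → V) : Prop :=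
  (∀ n, T.Adj (τ n) (τ (n + 1))) ∧ Function.Injective τ

/-- `p` lies in the horoball `HB_r(τ)`, i.e. the Busemann function
`β_τ(p) = lim_n (n - d(τ(n), p))` (the limit of a nondecreasing sequence,
so membership is an existential) is at least `r`. -/
def InHoroball {V : Type*} (T : SimpleGraph V) (τ : ℕ → V) (r : ℝ) (p : V) : Prop :=
  ∃ n : ℕ, r ≤ (n : ℝ) - (T.dist (τ n) p : ℝ)

/-- The oriented edge `(a, b)` points toward the end represented by the geodesic
ray `τ`: the geodesic from `a` to the end passes through the edge, i.e. eventually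
`d(b, τ(n)) + 1 = d(a, τ(n))`. -/
def EdgeTowardEnd {V : Type*} (T : SimpleGraph V) (τ : ℕ → V) (a b : V) : Prop :=
  T.Adj a b ∧ ∃ N : ℕ, ∀ n ≥ N, T.dist b (τ n) + 1 = T.dist a (τ n)



open SimpleGraph Walk

namespace Stmt1Aux

variable {V : Type*} {T : SimpleGraph V}

lemma getVert_copy' {u v u' v' : V} (p : T.Walk u v) (hu : u = u') (hv : v = v') (i : ℕ) :
    (p.copy hu hv).getVert i = p.getVert i := by
  subst hu; subst hv; rw [Walk.copy_rfl_rfl]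

lemma getVert_map' {W' : Type*} {T' : SimpleGraph W'} (f : T →g T') {u v : V}
    (p : T.Walk u v) (i : ℕ) : (p.map f).getVert i = f (p.getVert i) := by
  induction p generalizing i with
  | nil => simp [Walk.getVert]
  | cons h q ih =>
    cases i with
    | zero => simp
    | succ n => simp only [Walk.map_cons, Walk.getVert_cons_succ, ih]

lemma path_length_eq_dist (hT : T.IsTree) {u v : V} (p : T.Walk u v) (hp : p.IsPath) :
    p.length = T.dist u v := by
  obtain ⟨q, hql⟩ := hT.isConnected.exists_walk_length_eq_dist u v
  have hq : q.IsPath := q.isPath_of_length_eq_dist hql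
  have : (⟨p, hp⟩ : T.Path u v) = ⟨q, hq⟩ := hT.IsAcyclic.path_unique _ _
  rw [show p = q from congrArg Subtype.val this, hql]

/-- A reduced (non-backtracking) walk. -/
def Reduced {u v : V} (w : T.Walk u v) : Prop :=
  ∀ i, i + 2 ≤ w.length → w.getVert i ≠ w.getVert (i + 2)

lemma reduced_of_isPath : ∀ {u v : V} (w : T.Walk u v), w.IsPath → Reduced w := by
  intro u v w
  induction w with
  | nil => intro _ i hi; simp at hi
  | cons h q ih =>
    intro hp i hi
    rw [Walk.cons_isPath_iff] at hp
    rcases hp with ⟨hq, hnot⟩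
    cases i with
    | zero =>
      simp only [Walk.length_cons] at hi
      simp only [Walk.getVert_zero, Walk.getVert_cons_succ]
      intro heq
      exact hnot (heq ▸ (Walk.mem_support_iff_exists_getVert.mpr ⟨1, rfl, by omega⟩))
    | succ n =>
      simp only [Walk.length_cons] at hi
      simp only [Walk.getVert_cons_succ]
      exact ih hq n (by omega)

lemma reduced_isPath (hT : T.IsTree) : ∀ {u v : V} (w : T.Walk u v), Reduced w → w.IsPath := by
  intro u v w
  induction w with
  | nil => intro _; exact Walk.IsPath.nil
  | cons h q ih =>
    rename_i x y z
    intro hred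
    classical
    have hq : q.IsPath := by
      apply ih
      intro i hi
      have := hred (i + 1) (by simp only [Walk.length_cons]; omega)
      simpa only [Walk.getVert_cons_succ] using this
    rw [Walk.cons_isPath_iff]
    refine ⟨hq, fun hmem => ?_⟩
    -- x ∈ q.support, q : Walk y z, h : Adj x y
    have hqlen : 1 ≤ q.length := by
      rcases Nat.eq_zero_or_pos q.length with h0 | h1
      · exfalso
        have : q.support = [y] := by
          cases q with
          | nil => rfl
          | cons h' q' => simp [Walk.length_cons] at h0
        rw [this] at hmem
        simp at hmem
        exact h.ne hmem
      · exact h1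
    -- unique path from y to x
    have hp1 : (q.takeUntil x hmem).IsPath := hq.takeUntil hmem
    have hp2 : (Walk.cons h.symm Walk.nil : T.Walk y x).IsPath := by
      simp [h.ne']
    have heq : (⟨q.takeUntil x hmem, hp1⟩ : T.Path y x) = ⟨Walk.cons h.symm Walk.nil, hp2⟩ :=
      hT.IsAcyclic.path_unique _ _
    have heqw : q.takeUntil x hmem = Walk.cons h.symm Walk.nil := congrArg Subtype.val heq
    have hgv : q.getVert 1 = x := by
      conv_lhs => rw [← q.take_spec hmem]
      rw [Walk.getVert_append, heqw]
      simp [Walk.getVert]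
    have := hred 0 (by simp only [Walk.length_cons]; omega)
    simp only [Walk.getVert_zero, Walk.getVert_cons_succ] at this
    exact this (hgv.symm)

lemma reduced_append {u v w : V} (p : T.Walk u v) (q : T.Walk v w)
    (hp : Reduced p) (hq : Reduced q)
    (hjunc : 1 ≤ p.length → 1 ≤ q.length → p.getVert (p.length - 1) ≠ q.getVert 1) :
    Reduced (p.append q) := by
  intro i hi
  rw [Walk.length_append] at hi
  rw [Walk.getVert_append, Walk.getVert_append]
  rcases Nat.lt_or_ge (i + 2) (p.length + 1) with hcase | hcase
  · -- i + 2 ≤ p.length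
    have h1 : i < p.length := by omega
    have h2 : i + 2 ≤ p.length := by omega
    simp only [if_pos h1]
    by_cases h3 : i + 2 < p.length
    · simp only [if_pos h3]; exact hp i h2
    · have h4 : i + 2 = p.length := by omega
      simp only [if_neg h3]
      rw [h4, Nat.sub_self, Walk.getVert_zero]
      have := hp i h2
      rwa [h4, Walk.getVert_length] at this
  · rcases Nat.lt_or_ge i p.length with hil | hil
    · -- i = p.length - 1, junction case
      have h1 : i = p.length - 1 := by omega
      have h2 : 1 ≤ p.length := by omega
      have h3 : 1 ≤ q.length := by omega
      have h4 : ¬ (i + 2 < p.length) := by omega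
      simp only [if_pos hil, if_neg h4]
      have h5 : i + 2 - p.length = 1 := by omega
      rw [h5, h1]
      exact hjunc h2 h3
    · -- both in q
      have h4 : ¬ (i < p.length) := by omega
      have h5 : ¬ (i + 2 < p.length) := by omega
      simp only [if_neg h4, if_neg h5]
      have h6 : i + 2 - p.length = (i - p.length) + 2 := by omega
      rw [h6]
      exact hq (i - p.length) (by omega)


variable {τ : ℕ → V}

def rwalk (hadj : ∀ n, T.Adj (τ n) (τ (n + 1))) (i : ℕ) :
    (len : ℕ) → T.Walk (τ i) (τ (i + len))
  | 0 => Walk.nil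
  | (len + 1) => (rwalk hadj i len).concat (hadj (i + len))

@[simp] lemma rwalk_length (hadj : ∀ n, T.Adj (τ n) (τ (n + 1))) (i len : ℕ) :
    (rwalk hadj i len).length = len := by
  induction len with
  | zero => rfl
  | succ n ih => rw [rwalk, Walk.length_concat, ih]

lemma rwalk_getVert (hadj : ∀ n, T.Adj (τ n) (τ (n + 1))) (i len t : ℕ) (ht : t ≤ len) :
    (rwalk hadj i len).getVert t = τ (i + t) := by
  induction len generalizing t with
  | zero =>
    have : t = 0 := by omega
    subst this; exact Walk.getVert_zero _
  | succ n ih =>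
    rw [rwalk, Walk.concat_eq_append, Walk.getVert_append, rwalk_length]
    by_cases h : t < n
    · rw [if_pos h]; exact ih t (by omega)
    · rw [if_neg h]
      rcases Nat.eq_or_lt_of_le ht with h1 | h1
      · subst h1
        have : n + 1 - n = 1 := by omega
        rw [this]
        simp [Walk.getVert]
      · have : t = n := by omega
        subst this
        rw [Nat.sub_self]
        exact Walk.getVert_zero _

lemma rwalk_reduced (hadj : ∀ n, T.Adj (τ n) (τ (n + 1))) (hinj : Function.Injective τ)
    (i len : ℕ) : Reduced (rwalk hadj i len) := by
  intro t ht
  rw [rwalk_length] at ht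
  rw [rwalk_getVert hadj i len t (by omega), rwalk_getVert hadj i len (t+2) ht]
  intro h
  have := hinj h
  omega

lemma dist_ray (hT : T.IsTree) (hadj : ∀ n, T.Adj (τ n) (τ (n + 1)))
    (hinj : Function.Injective τ) (i len : ℕ) :
    T.dist (τ i) (τ (i + len)) = len := by
  rw [← path_length_eq_dist hT (rwalk hadj i len)
    (reduced_isPath hT _ (rwalk_reduced hadj hinj i len)), rwalk_length]

/-- Monotonicity of the Busemann sequence, in `ℤ`. -/
lemma busemann_mono (hT : T.IsTree) (hadj : ∀ n, T.Adj (τ n) (τ (n + 1)))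
    (hinj : Function.Injective τ) (p : V) {i j : ℕ} (hij : i ≤ j) :
    (i : ℤ) - T.dist (τ i) p ≤ (j : ℤ) - T.dist (τ j) p := by
  have htri : T.dist (τ j) p ≤ T.dist (τ j) (τ i) + T.dist (τ i) p :=
    hT.isConnected.dist_triangle
  have hc : T.dist (τ j) (τ i) = T.dist (τ i) (τ j) := dist_comm
  have hd2 : (T.dist (τ i) (τ j) : ℤ) = (j : ℤ) - i := by
    have h := dist_ray hT hadj hinj i (j - i)
    rw [show i + (j - i) = j by omega] at h
    omega
  omega

/-- Eventual linearity of distance to a ray, in `ℤ`. -/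
lemma exists_linear (hT : T.IsTree) (hadj : ∀ n, T.Adj (τ n) (τ (n + 1)))
    (hinj : Function.Injective τ) (p : V) :
    ∃ J : ℕ, ∀ j ≥ J, (T.dist (τ j) p : ℤ) = (T.dist (τ J) p : ℤ) + j - J := by
  have Hbdd : ∃ b : ℤ, ∀ z : ℤ, (∃ j : ℕ, (j : ℤ) - T.dist (τ j) p = z) → z ≤ b := by
    refine ⟨(T.dist (τ 0) p : ℤ), ?_⟩
    rintro z ⟨j, rfl⟩
    have htri : T.dist (τ 0) (τ j) ≤ T.dist (τ 0) p + T.dist p (τ j) :=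
      hT.isConnected.dist_triangle
    have hd : T.dist (τ 0) (τ j) = j := by
      have := dist_ray hT hadj hinj 0 j
      rwa [Nat.zero_add] at this
    have hc : T.dist p (τ j) = T.dist (τ j) p := dist_comm
    omega
  obtain ⟨z₀, ⟨J, hJ⟩, hgr⟩ :=
    Int.exists_greatest_of_bdd (P := fun z => ∃ j : ℕ, (j : ℤ) - T.dist (τ j) p = z)
      Hbdd ⟨(0 : ℤ) - T.dist (τ 0) p, 0, by norm_num⟩
  refine ⟨J, fun j hj => ?_⟩
  have h1 : (j : ℤ) - T.dist (τ j) p ≤ z₀ := hgr _ ⟨j, rfl⟩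
  have h2 : (J : ℤ) - T.dist (τ J) p ≤ (j : ℤ) - T.dist (τ j) p :=
    busemann_mono hT hadj hinj p hj
  omega


/-- KEY one-step lemma: applying the partial translation `φ` pushes a vertex lying
"behind `τ n`" deeper by `m - n`. -/
lemma key_step (hT : T.IsTree) (hadj : ∀ n, T.Adj (τ n) (τ (n + 1)))
    (hinj : Function.Injective τ) {n m : ℕ} (hnm : n < m)
    (φ : V → V) (hφinj : Function.Injective φ)
    (hφAdj : ∀ x y, T.Adj x y → T.Adj (φ x) (φ y))
    (hφm : φ (τ m) = τ n) (hφm1 : φ (τ (m + 1)) = τ (n + 1))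
    (y : V) (D : ℤ) (hy : ∀ j, n ≤ j → (T.dist y (τ j) : ℤ) = D + j - n) :
    ∀ j, n ≤ j → (T.dist (φ y) (τ j) : ℤ) = D + (m - n) + (j - n) := by
  classical
  intro j hj
  have hD0 : 0 ≤ D := by have := hy n le_rfl; have := Int.ofNat_nonneg (T.dist y (τ n)); omega
  -- geodesic walk from y to τ m
  obtain ⟨W, hWl⟩ := hT.isConnected.exists_walk_length_eq_dist y (τ m)
  have hWp : W.IsPath := W.isPath_of_length_eq_dist hWl
  have hlen : (W.length : ℤ) = D + (m - n) := by
    rw [hWl]; have := hy m (by omega); omega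
  have hWlen1 : 1 ≤ W.length := by omega
  -- map under φ
  let f : T →g T := ⟨φ, fun {x y} h => hφAdj x y h⟩
  have hfy : ∀ x : V, f x = φ x := fun _ => rfl
  let P1 : T.Walk (φ y) (τ n) := (W.map f).copy rfl hφm
  have hP1p : P1.IsPath := by
    rw [Walk.isPath_copy]
    exact W.map_isPath_of_injective hφinj hWp
  have hP1len : P1.length = W.length := by
    simp only [P1, Walk.length_copy, Walk.length_map]
  have hP1get : ∀ t, P1.getVert t = φ (W.getVert t) := by
    intro t
    simp only [P1, getVert_copy', getVert_map', hfy]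
  -- walk along the ray
  let P2 : T.Walk (τ n) (τ j) :=
    (rwalk hadj n (j - n)).copy rfl (congrArg τ (by omega))
  have hP2len : P2.length = j - n := by
    simp only [P2, Walk.length_copy, rwalk_length]
  have hP2red : Reduced P2 := by
    intro i hi
    simp only [P2, getVert_copy']
    rw [hP2len] at hi
    exact rwalk_reduced hadj hinj n (j - n) i (by rw [rwalk_length]; exact hi)
  -- junction
  have hjunc : 1 ≤ P1.length → 1 ≤ P2.length →
      P1.getVert (P1.length - 1) ≠ P2.getVert 1 := by
    intro _ h2
    rw [hP1get, hP1len]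
    have hP2get1 : P2.getVert 1 = τ (n + 1) := by
      simp only [P2, getVert_copy']
      exact rwalk_getVert hadj n (j - n) 1 (by rw [hP2len] at h2; omega)
    rw [hP2get1, ← hφm1]
    intro heq
    have hWv : W.getVert (W.length - 1) = τ (m + 1) := hφinj heq
    have hmem : τ (m + 1) ∈ W.support :=
      Walk.mem_support_iff_exists_getVert.mpr ⟨W.length - 1, hWv, by omega⟩
    have hd1 : T.dist y (τ (m + 1)) ≤ (W.takeUntil (τ (m + 1)) hmem).length :=
      dist_le _
    have hd2 : (W.takeUntil (τ (m + 1)) hmem).length ≤ W.length :=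
      W.length_takeUntil_le hmem
    have := hy (m + 1) (by omega)
    omega
  have hred : Reduced (P1.append P2) :=
    reduced_append P1 P2 (reduced_of_isPath P1 hP1p) hP2red hjunc
  have hpath : (P1.append P2).IsPath := reduced_isPath hT _ hred
  have hdist := path_length_eq_dist hT _ hpath
  rw [Walk.length_append, hP1len, hP2len] at hdist
  rw [← hdist]
  omega


end Stmt1Aux

/-- Let `G` act cocompactly by automorphisms on an infinite locally
finite tree `T`, let `τ` be a geodesic ray (representing an end `E`), `r` a real
number, and `(a,b)` an oriented edge of `T` oriented toward `E`.  Then some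
`G`-translate of the edge is oriented toward `E` and does not lie in the
horoball `HB_r(τ)`. -/
theorem stmt1 {V : Type*} (T : SimpleGraph V) (hT : T.IsTree) (hinf : Infinite V)
    (hlf : T.LocallyFinite)
    (G : Type*) [Group G] [MulAction G V]
    (hact : ∀ (g : G) (x y : V), T.Adj x y → T.Adj (g • x) (g • y))
    (hcocompact : ∃ s : Finset V, ∀ v : V, ∃ g : G, g • v ∈ s)
    (τ : ℕ → V) (hτ : IsGeodRay T τ) (r : ℝ)
    (a b : V) (hab : EdgeTowardEnd T τ a b) :
    ∃ g : G, EdgeTowardEnd T τ (g • a) (g • b) ∧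
      ¬(InHoroball T τ r (g • a) ∧ InHoroball T τ r (g • b)) := by
  classical
  obtain ⟨hadj, hinj⟩ := hτ
  obtain ⟨habAdj, N, habN⟩ := hab
  obtain ⟨Ja, hJa⟩ := Stmt1Aux.exists_linear hT hadj hinj a
  obtain ⟨Jb, hJb⟩ := Stmt1Aux.exists_linear hT hadj hinj b
  set n₀ : ℕ := max (max Ja Jb) N with hn₀
  -- Pigeonhole: two ray edges beyond n₀ in the same (oriented) orbit.
  have hpigeon : ∃ n m : ℕ, n₀ ≤ n ∧ n < m ∧
      ∃ h : G, h • τ n = τ m ∧ h • τ (n + 1) = τ (m + 1) := by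
    obtain ⟨s, hs⟩ := hcocompact
    choose gg hgg using hs
    set Fin' : Finset (V × V) := s ×ˢ s.biUnion (fun v => T.neighborFinset v) with hFin'
    have hmemF : ∀ i : ℕ,
        (gg (τ (n₀ + i)) • τ (n₀ + i), gg (τ (n₀ + i)) • τ (n₀ + i + 1)) ∈ Fin' := by
      intro i
      rw [hFin', Finset.mem_product]
      refine ⟨hgg _, Finset.mem_biUnion.mpr ⟨_, hgg (τ (n₀ + i)), ?_⟩⟩
      rw [SimpleGraph.mem_neighborFinset]
      exact hact _ _ _ (hadj (n₀ + i))
    obtain ⟨i, j, hij, hFeq⟩ := Finite.exists_ne_map_eq_of_infinite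
      (fun i : ℕ => (⟨(gg (τ (n₀ + i)) • τ (n₀ + i), gg (τ (n₀ + i)) • τ (n₀ + i + 1)),
        hmemF i⟩ : {x // x ∈ Fin'}))
    have hFeq' : (gg (τ (n₀ + i)) • τ (n₀ + i), gg (τ (n₀ + i)) • τ (n₀ + i + 1)) =
        (gg (τ (n₀ + j)) • τ (n₀ + j), gg (τ (n₀ + j)) • τ (n₀ + j + 1)) :=
      congrArg Subtype.val hFeq
    rw [Prod.mk.injEq] at hFeq'
    obtain ⟨h1, h2⟩ := hFeq'
    rcases Nat.lt_or_ge i j with hlt | hge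
    · refine ⟨n₀ + i, n₀ + j, Nat.le_add_right _ _, by omega,
        (gg (τ (n₀ + j)))⁻¹ * gg (τ (n₀ + i)), ?_, ?_⟩
      · rw [mul_smul, h1, inv_smul_smul]
      · rw [mul_smul, h2, inv_smul_smul]
    · have hlt : j < i := by omega
      refine ⟨n₀ + j, n₀ + i, Nat.le_add_right _ _, by omega,
        (gg (τ (n₀ + i)))⁻¹ * gg (τ (n₀ + j)), ?_, ?_⟩
      · rw [mul_smul, ← h1, inv_smul_smul]
      · rw [mul_smul, ← h2, inv_smul_smul]
  obtain ⟨n, m, hn₀n, hnm, h, hhn, hhn1⟩ := hpigeon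
  -- base linearity at threshold n
  have hbase : ∀ (x : V) (Jx : ℕ),
      (∀ j ≥ Jx, (T.dist (τ j) x : ℤ) = (T.dist (τ Jx) x : ℤ) + j - Jx) → Jx ≤ n →
      ∀ j, n ≤ j → (T.dist x (τ j) : ℤ) = (T.dist x (τ n) : ℤ) + j - n := by
    intro x Jx hJx hJxn j hj
    have e1 := hJx j (by omega)
    have e2 := hJx n hJxn
    have c1 : T.dist x (τ j) = T.dist (τ j) x := SimpleGraph.dist_comm
    have c2 : T.dist x (τ n) = T.dist (τ n) x := SimpleGraph.dist_comm
    omega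
  have hxa : ∀ j, n ≤ j → (T.dist a (τ j) : ℤ) = (T.dist a (τ n) : ℤ) + j - n :=
    hbase a Ja hJa (by omega)
  have hxb : ∀ j, n ≤ j → (T.dist b (τ j) : ℤ) = (T.dist b (τ n) : ℤ) + j - n :=
    hbase b Jb hJb (by omega)
  set Da : ℤ := (T.dist a (τ n) : ℤ) with hDa
  set Db : ℤ := (T.dist b (τ n) : ℤ) with hDb
  have hDab : Da = Db + 1 := by
    have := habN n (by omega)
    rw [hDa, hDb, SimpleGraph.dist_comm (u := a), SimpleGraph.dist_comm (u := b)]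
    rw [SimpleGraph.dist_comm (u := τ n) (v := a), SimpleGraph.dist_comm (u := τ n) (v := b)]
    omega
  -- iteration
  have hiter : ∀ (x : V) (Dx : ℤ),
      (∀ j, n ≤ j → (T.dist x (τ j) : ℤ) = Dx + j - n) →
      ∀ (k : ℕ), ∀ j, n ≤ j →
        (T.dist ((h ^ k)⁻¹ • x) (τ j) : ℤ) = Dx + k * ((m : ℤ) - n) + j - n := by
    intro x Dx hx k
    induction k with
    | zero =>
      intro j hj
      rw [pow_zero, inv_one, one_smul]
      have := hx j hj
      push_cast
      omega
    | succ k ih =>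
      have step := Stmt1Aux.key_step hT hadj hinj hnm (fun v => h⁻¹ • v)
        (MulAction.injective h⁻¹) (fun x y hxy => hact h⁻¹ x y hxy)
        (by simp only [inv_smul_eq_iff]; exact hhn.symm)
        (by simp only [inv_smul_eq_iff]; exact hhn1.symm)
        ((h ^ k)⁻¹ • x) (Dx + k * ((m : ℤ) - n))
        (by intro j hj; have := ih j hj; omega)
      intro j hj
      have hsm : (h ^ (k + 1))⁻¹ • x = h⁻¹ • ((h ^ k)⁻¹ • x) := by
        rw [pow_succ, mul_inv_rev, mul_smul]
      rw [hsm]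
      have := step j hj
      have hring : ((k : ℤ) + 1) * ((m : ℤ) - n) = (k : ℤ) * ((m : ℤ) - n) + ((m : ℤ) - n) := by
        ring
      push_cast at this ⊢
      omega
  -- choose k
  obtain ⟨k, hk⟩ := exists_nat_gt ((n : ℝ) - (Da : ℝ) - r)
  refine ⟨(h ^ k)⁻¹, ⟨hact _ _ _ habAdj, n, fun j hj => ?_⟩, ?_⟩
  · -- edge toward end
    have ha' := hiter a Da hxa k j hj
    have hb' := hiter b Db hxb k j hj
    omega
  · -- not in horoball (first component)
    rintro ⟨⟨jj, hjj⟩, -⟩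
    have hmono := Stmt1Aux.busemann_mono hT hadj hinj ((h ^ k)⁻¹ • a) (le_max_left jj n)
    have hMval := hiter a Da hxa k (max jj n) (le_max_right jj n)
    have hcomm : T.dist (τ (max jj n)) ((h ^ k)⁻¹ • a)
        = T.dist ((h ^ k)⁻¹ • a) (τ (max jj n)) := SimpleGraph.dist_comm
    have hmul : (k : ℤ) ≤ (k : ℤ) * ((m : ℤ) - n) :=
      le_mul_of_one_le_right (Int.ofNat_nonneg k) (by omega)
    have hZ : (jj : ℤ) - T.dist (τ jj) ((h ^ k)⁻¹ • a) ≤ (n : ℤ) - Da - k := by omega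
    have hR : (jj : ℝ) - (T.dist (τ jj) ((h ^ k)⁻¹ • a) : ℝ) ≤ (n : ℝ) - (Da : ℝ) - k := by
      exact_mod_cast hZ
    linarith
end

section
/- Let T be a cocompact G-tree. If an oriented edge e₁ and an oriented edge e₂ in the same G-orbit both lie on a common geodesic ray and are consistently oriented along it, then any g ∈ G with g·e₁ = e₂ and e₁ ≠ e₂ is a hyperbolic automorphism of T. -/
open SimpleGraph

section Aux

variable {V : Type*} {T : SimpleGraph V}

private lemma path_unique (hT : T.IsTree) {u v : V} (p q : T.Walk u v)
    (hp : p.IsPath) (hq : q.IsPath) : p = q := by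
  have := isAcyclic_iff_path_unique.mp hT.2 (⟨p, hp⟩ : T.Path u v) ⟨q, hq⟩
  simpa using congrArg Subtype.val this

/-- Extend a geodesic path to a neighbor not closer. -/
private lemma concat_path (hT : T.IsTree) {x y z : V} (p : T.Walk x y)
    (hp : p.IsPath) (hlen : p.length = T.dist x y) (h : T.Adj y z)
    (hd : T.dist x y < T.dist x z) :
    ∃ q : T.Walk x z, q.IsPath ∧ q = p.concat h := by
  classical
  refine ⟨p.concat h, ?_, rfl⟩
  have hz : z ∉ p.support := by
    intro hz
    have h1 : T.dist x z ≤ (p.takeUntil z hz).length := T.dist_le _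
    have h2 : (p.takeUntil z hz).length ≤ p.length := p.length_takeUntil_le hz
    omega
  rw [Walk.isPath_def, Walk.support_concat,
    List.nodup_append]
  refine ⟨hp.support_nodup, List.nodup_singleton z, ?_⟩
  intro a ha b hb
  simp only [List.mem_singleton] at hb
  subst hb
  exact fun hab => hz (hab ▸ ha)

/-- In a tree, adjacent vertices have different distances to any vertex. -/
private lemma adj_dist_ne (hT : T.IsTree) (x : V) {y z : V} (h : T.Adj y z) :
    T.dist x y ≠ T.dist x z := by
  classical
  intro heq
  obtain ⟨p, hp, hpl⟩ := hT.isConnected.exists_path_of_dist x y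
  obtain ⟨q, hq, hql⟩ := hT.isConnected.exists_path_of_dist x z
  -- concat p with h gives a path x → z of length dist x y + 1
  have hz : z ∉ p.support := by
    intro hz
    have h1 : T.dist x z ≤ (p.takeUntil z hz).length := T.dist_le _
    have hsp : p = (p.takeUntil z hz).append (p.dropUntil z hz) :=
      (p.take_spec hz).symm
    have h3 : (p.dropUntil z hz).length ≠ 0 := by
      intro h0
      have : z = y := by
        have := (p.dropUntil z hz)
        exact Walk.eq_of_length_eq_zero h0
      exact h.ne (this ▸ rfl)
    have h2 : (p.takeUntil z hz).length + (p.dropUntil z hz).length = p.length := by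
      have := congrArg Walk.length hsp
      rw [Walk.length_append] at this
      omega
    omega
  have hcat : (p.concat h).IsPath := by
    rw [Walk.isPath_def, Walk.support_concat,
      List.nodup_append]
    refine ⟨hp.support_nodup, List.nodup_singleton z, ?_⟩
    intro a ha b hb
    simp only [List.mem_singleton] at hb
    subst hb
    exact fun hab => hz (hab ▸ ha)
  have := path_unique hT (p.concat h) q hcat hq
  have hlen : (p.concat h).length = q.length := by rw [this]
  rw [Walk.length_concat, hpl, hql] at hlen
  omega

/-- In a tree, the neighbor of `z` strictly closer to `x` is unique. -/
private lemma closer_neighbor_unique (hT : T.IsTree) {x z y₁ y₂ : V}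
    (h₁ : T.Adj z y₁) (h₂ : T.Adj z y₂)
    (hd₁ : T.dist x y₁ + 1 = T.dist x z) (hd₂ : T.dist x y₂ + 1 = T.dist x z) :
    y₁ = y₂ := by
  obtain ⟨p₁, hp₁, hl₁⟩ := hT.isConnected.exists_path_of_dist x y₁
  obtain ⟨p₂, hp₂, hl₂⟩ := hT.isConnected.exists_path_of_dist x y₂
  obtain ⟨q₁, hq₁, hqe₁⟩ := concat_path hT p₁ hp₁ hl₁ h₁.symm (by omega)
  obtain ⟨q₂, hq₂, hqe₂⟩ := concat_path hT p₂ hp₂ hl₂ h₂.symm (by omega)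
  have heq : q₁ = q₂ := path_unique hT q₁ q₂ hq₁ hq₂
  have : q₁.reverse.getVert 1 = q₂.reverse.getVert 1 := by rw [heq]
  rwa [hqe₁, hqe₂, Walk.reverse_concat, Walk.reverse_concat,
    Walk.getVert_cons_succ, Walk.getVert_cons_succ,
    Walk.getVert_zero, Walk.getVert_zero] at this

/-- In a tree, a non-backtracking walk is geodesic. -/
private lemma dist_of_no_backtrack (hT : T.IsTree) (σ : ℕ → V)
    (hadj : ∀ n, T.Adj (σ n) (σ (n + 1))) (hnb : ∀ n, σ (n + 2) ≠ σ n) :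
    ∀ n, T.dist (σ 0) (σ n) = n := by
  have key : ∀ n, T.dist (σ 0) (σ n) = n ∧ T.dist (σ 0) (σ (n + 1)) = n + 1 := by
    intro n
    induction n with
    | zero =>
      constructor
      · simp
      · exact dist_eq_one_iff_adj.mpr (hadj 0)
    | succ n ih =>
      obtain ⟨ih1, ih2⟩ := ih
      refine ⟨ih2, ?_⟩
      show T.dist (σ 0) (σ (n + 2)) = n + 2
      have hadj2 : T.Adj (σ (n + 1)) (σ (n + 2)) := hadj (n + 1)
      have hle : T.dist (σ 0) (σ (n + 2)) ≤ n + 2 := by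
        have := hT.isConnected.dist_triangle (u := σ 0) (v := σ (n + 1)) (w := σ (n + 2))
        have h1 : T.dist (σ (n + 1)) (σ (n + 2)) ≤ 1 := T.dist_le hadj2.toWalk
        omega
      have hge : n ≤ T.dist (σ 0) (σ (n + 2)) := by
        have := hT.isConnected.dist_triangle (u := σ 0) (v := σ (n + 2)) (w := σ (n + 1))
        have h1 : T.dist (σ (n + 2)) (σ (n + 1)) ≤ 1 := T.dist_le hadj2.symm.toWalk
        omega
      have hne : T.dist (σ 0) (σ (n + 2)) ≠ n + 1 := by
        have := adj_dist_ne hT (σ 0) hadj2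
        omega
      have hne' : T.dist (σ 0) (σ (n + 2)) ≠ n := by
        intro hd
        exact hnb n (closer_neighbor_unique (x := σ 0) hT (hadj n).symm
          hadj2 (by omega) (by omega)).symm
      omega
  exact fun n => (key n).1
end Aux

section Main

variable {V : Type*} {T : SimpleGraph V}

private lemma dist_smul' {G : Type*} [Group G] [MulAction G V]
    (hact : ∀ (g : G) (x y : V), T.Adj x y → T.Adj (g • x) (g • y))
    (hc : T.Connected)
    (g : G) (a b : V) : T.dist (g • a) (g • b) = T.dist a b := by
  have key : ∀ (h : G) (x y : V), T.dist (h • x) (h • y) ≤ T.dist x y := by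
    intro h x y
    obtain ⟨p, hp⟩ := (hc x y).exists_walk_length_eq_dist
    let f : T →g T := ⟨fun v => h • v, fun hadj => hact h _ _ hadj⟩
    calc T.dist (h • x) (h • y) ≤ (p.map f).length := T.dist_le _
      _ = p.length := Walk.length_map f p
      _ = T.dist x y := hp
  refine le_antisymm (key g a b) ?_
  have := key g⁻¹ (g • a) (g • b)
  rwa [inv_smul_smul, inv_smul_smul] at this

/-- Main lemma: g translates along a ray, i < j version. -/
private lemma no_fixed_point (hT : T.IsTree)
    {G : Type*} [Group G] [MulAction G V]
    (hact : ∀ (g : G) (x y : V), T.Adj x y → T.Adj (g • x) (g • y))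
    (τ : ℕ → V) (hτ : IsGeodRay T τ)
    (i j : ℕ) (hij : i < j) (g : G)
    (hg : g • τ i = τ j ∧ g • τ (i + 1) = τ (j + 1)) :
    ∀ x : V, g • x ≠ x := by
  intro x hx
  set d := j - i with hd
  have hd1 : 1 ≤ d := by omega
  have hdpos : 0 < d := hd1
  have hjd : j = i + d := by omega
  set σ : ℕ → V := fun n => g ^ (n / d) • τ (i + n % d) with hσ
  -- division facts
  have hmod : ∀ n : ℕ, n % d < d := fun n => Nat.mod_lt n hdpos
  have hcase : ∀ n : ℕ, (n % d + 1 < d → (n + 1) / d = n / d ∧ (n + 1) % d = n % d + 1)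
      ∧ (n % d + 1 = d → (n + 1) / d = n / d + 1 ∧ (n + 1) % d = 0) := by
    intro n
    have hdm := Nat.div_add_mod n d
    constructor
    · intro h
      have : (n + 1) / d = n / d ∧ (n + 1) % d = n % d + 1 := by
        have := (Nat.div_mod_unique hdpos (a := n + 1) (d := n / d) (c := n % d + 1)).mpr
          ⟨by omega, by omega⟩
        exact ⟨this.1, this.2⟩
      exact this
    · intro h
      have : (n + 1) / d = n / d + 1 ∧ (n + 1) % d = 0 := by
        have hexp : d * (n / d + 1) = d * (n / d) + d := by ring
        have := (Nat.div_mod_unique hdpos (a := n + 1) (d := n / d + 1) (c := 0)).mpr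
          ⟨by omega, by omega⟩
        exact ⟨this.1, this.2⟩
      exact this
  have key1 : ∀ n : ℕ, σ (n + 1) = g ^ (n / d) • τ (i + n % d + 1) := by
    intro n
    rcases Nat.lt_or_ge (n % d + 1) d with h | h
    · obtain ⟨h1, h2⟩ := (hcase n).1 h
      simp only [hσ, h1, h2, Nat.add_assoc]
    · have heq : n % d + 1 = d := by have := hmod n; omega
      obtain ⟨h1, h2⟩ := (hcase n).2 heq
      simp only [hσ, h1, h2, Nat.add_zero]
      rw [show i + n % d + 1 = j from by omega, pow_succ, mul_smul, hg.1]
  have key2 : ∀ n : ℕ, σ (n + 2) = g ^ (n / d) • τ (i + n % d + 2) := by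
    intro n
    have := key1 (n + 1)
    rcases Nat.lt_or_ge (n % d + 1) d with h | h
    · obtain ⟨h1, h2⟩ := (hcase n).1 h
      rw [show n + 1 + 1 = n + 2 from rfl] at this
      rw [this, h1, h2, show i + (n % d + 1) + 1 = i + n % d + 2 from by omega]
    · have heq : n % d + 1 = d := by have := hmod n; omega
      obtain ⟨h1, h2⟩ := (hcase n).2 heq
      rw [show n + 1 + 1 = n + 2 from rfl] at this
      rw [this, h1, h2]
      simp only [Nat.add_zero]
      rw [pow_succ, mul_smul, hg.2, show i + n % d + 2 = j + 1 from by omega]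
  have hadj : ∀ n, T.Adj (σ n) (σ (n + 1)) := by
    intro n
    rw [key1 n]
    exact hact (g ^ (n / d)) _ _ (hτ.1 (i + n % d))
  have hnb : ∀ n, σ (n + 2) ≠ σ n := by
    intro n h
    rw [key2 n] at h
    have h2 := smul_left_cancel (g ^ (n / d)) h
    have := hτ.2 h2
    omega
  have hdist := dist_of_no_backtrack hT σ hadj hnb
  have hσ0 : σ 0 = τ i := by simp [hσ]
  have hσnd : ∀ n : ℕ, σ (n * d) = g ^ n • τ i := by
    intro n
    simp [hσ, Nat.mul_div_cancel _ hdpos, Nat.mul_mod_left]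
  have hpow : ∀ n : ℕ, g ^ n • x = x := by
    intro n
    induction n with
    | zero => simp
    | succ n ih => rw [pow_succ, mul_smul, hx, ih]
  set m := 2 * T.dist (τ i) x + 1 with hm
  have h1 : T.dist (τ i) (g ^ m • τ i) = m * d := by
    rw [← hσnd m, ← hσ0]; exact hdist (m * d)
  have h2 : T.dist x (g ^ m • τ i) = T.dist (τ i) x := by
    calc T.dist x (g ^ m • τ i) = T.dist (g ^ m • x) (g ^ m • τ i) := by rw [hpow m]
      _ = T.dist x (τ i) := dist_smul' hact hT.isConnected _ _ _
      _ = T.dist (τ i) x := T.dist_comm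
  have h3 := hT.isConnected.dist_triangle (u := τ i) (v := x) (w := g ^ m • τ i)
  rw [h1, h2] at h3
  nlinarith [Nat.one_le_iff_ne_zero.mp hd1]

end Main

/-- Let `T` be a cocompact `G`-tree (action by automorphisms,
without inversions).  If the oriented edges `e₁ = (τ i, τ (i+1))` and
`e₂ = (τ j, τ (j+1))` both lie on a common geodesic ray `τ` (hence are
consistently oriented along it) and `g • e₁ = e₂` with `e₁ ≠ e₂`, then `g` is a
hyperbolic automorphism of `T`: it fixes no vertex and no edge. -/
theorem stmt2 {V : Type*} (T : SimpleGraph V) (hT : T.IsTree)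
    (G : Type*) [Group G] [MulAction G V]
    (hact : ∀ (g : G) (x y : V), T.Adj x y → T.Adj (g • x) (g • y))
    (hnoinv : ∀ (g : G) (x y : V), T.Adj x y → ¬(g • x = y ∧ g • y = x))
    (hcocompact : ∃ s : Finset V, ∀ v : V, ∃ g : G, g • v ∈ s)
    (τ : ℕ → V) (hτ : IsGeodRay T τ)
    (i j : ℕ) (g : G)
    (hg : g • τ i = τ j ∧ g • τ (i + 1) = τ (j + 1))
    (hne : (τ i, τ (i + 1)) ≠ (τ j, τ (j + 1))) :
    (∀ x : V, g • x ≠ x) ∧ (∀ x y : V, T.Adj x y → ¬(g • x = y ∧ g • y = x)) := by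
  refine ⟨?_, fun x y h => hnoinv g x y h⟩
  have hij : i ≠ j := by
    intro h; subst h; exact hne rfl
  rcases lt_or_gt_of_ne hij with h | h
  · exact no_fixed_point hT hact τ hτ i j h g hg
  · intro x hx
    have hg' : g⁻¹ • τ j = τ i ∧ g⁻¹ • τ (j + 1) = τ (i + 1) := by
      constructor
      · rw [← hg.1, inv_smul_smul]
      · rw [← hg.2, inv_smul_smul]
    exact no_fixed_point hT hact τ hτ j i h g⁻¹ hg' x
      (inv_smul_eq_iff.mpr hx.symm)
end

section
/- Let T be a minimal G-tree and let ℰ be a nonempty G-invariant set of oriented edges of T. Then there is no vertex v of T such that every edge of ℰ is oriented away from v (i.e., for every vertex v there exists an edge of ℰ oriented toward v). -/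
/-- A `G`-tree is minimal if it has no proper nonempty `G`-invariant subtree
(nonempty convex invariant vertex set). -/
def IsMinimalGTree {V : Type*} (T : SimpleGraph V) (G : Type*) [Group G]
    [MulAction G V] : Prop :=
  ∀ A : Set V, A.Nonempty →
    (∀ a b c : V, a ∈ A → c ∈ A → T.dist a b + T.dist b c = T.dist a c → b ∈ A) →
    (∀ (g : G) (x : V), x ∈ A → g • x ∈ A) →
    A = Set.univ

/-- The oriented edge `(a, b)` is oriented toward the vertex `v`: the geodesic
from `v` to `a` passes through `b`, i.e. `d(v, b) + 1 = d(v, a)`. -/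
def EdgeTowardVertex {V : Type*} (T : SimpleGraph V) (v a b : V) : Prop :=
  T.dist v b + 1 = T.dist v a

section Aux

variable {V : Type*} {T : SimpleGraph V}

/-- vertices on a shortest walk split the distance. -/
lemma aux_mem_support {a b u : V} (p : T.Walk a b) (hp : p.length = T.dist a b)
    (hu : u ∈ p.support) : T.dist a u + T.dist u b ≤ T.dist a b := by
  classical
  have hspec := p.take_spec hu
  have hlen : (p.takeUntil u hu).length + (p.dropUntil u hu).length = p.length := by
    conv_rhs => rw [← hspec]
    exact (SimpleGraph.Walk.length_append _ _).symm
  have h1 := SimpleGraph.dist_le (p.takeUntil u hu)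
  have h2 := SimpleGraph.dist_le (p.dropUntil u hu)
  omega

/-- In a tree, any path realizes the distance. -/
lemma aux_path_len (hT : T.IsTree) {a b : V} (p : T.Walk a b) (hp : p.IsPath) :
    p.length = T.dist a b := by
  obtain ⟨q, hq, hql⟩ := (hT.isConnected a b).exists_path_of_dist
  have : (⟨p, hp⟩ : T.Path a b) = ⟨q, hq⟩ := hT.IsAcyclic.path_unique _ _
  rw [show p = q from congrArg Subtype.val this, hql]

/-- Distances to adjacent vertices differ by exactly one in a tree. -/
lemma aux_step (hT : T.IsTree) {x y : V} (hxy : T.Adj x y) (w : V) :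
    T.dist w x + 1 = T.dist w y ∨ T.dist w y + 1 = T.dist w x := by
  have hconn := hT.isConnected
  have hd1 : T.dist x y = 1 := SimpleGraph.dist_eq_one_iff_adj.mpr hxy
  have hd1' : T.dist y x = 1 := SimpleGraph.dist_eq_one_iff_adj.mpr hxy.symm
  have t1 : T.dist w y ≤ T.dist w x + 1 := by
    have := hconn.dist_triangle (u := w) (v := x) (w := y); omega
  have t2 : T.dist w x ≤ T.dist w y + 1 := by
    have := hconn.dist_triangle (u := w) (v := y) (w := x); omega
  -- rule out equality
  have hne : T.dist w x ≠ T.dist w y := by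
    intro heq
    obtain ⟨p, hp, hpl⟩ := (hconn w x).exists_path_of_dist
    have hy : y ∉ p.support := by
      intro hy
      have := aux_mem_support p hpl hy
      have hyx : T.dist y x = 1 := hd1'
      have hwy : T.dist w y = T.dist w x := heq.symm
      omega
    have hcp : (p.concat hxy).IsPath := by
      rw [SimpleGraph.Walk.isPath_def, SimpleGraph.Walk.support_concat]
      exact List.Nodup.append hp.support_nodup (List.nodup_singleton y)
        (by simpa [List.disjoint_left] using hy)
    have := aux_path_len hT (p.concat hxy) hcp
    rw [SimpleGraph.Walk.length_concat] at this
    omega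
  omega

/-- Crossing lemma: if `a` is on the `x`-side and `b` on the `y`-side of the
edge `x ~ y`, then the geodesic from `a` to `b` crosses the edge. -/
lemma aux_cross (hT : T.IsTree) {x y a b : V} (hxy : T.Adj x y)
    (ha : T.dist a x + 1 = T.dist a y) (hb : T.dist b y + 1 = T.dist b x) :
    T.dist a b = T.dist a x + 1 + T.dist y b := by
  have hconn := hT.isConnected
  obtain ⟨p, hp, hpl⟩ := (hconn a x).exists_path_of_dist
  obtain ⟨q, hq, hql⟩ := (hconn y b).exists_path_of_dist
  have hdisj : ∀ u ∈ p.support, u ∉ q.support := by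
    intro u hup huq
    have h1 := aux_mem_support p hpl hup
    have h2 := aux_mem_support q hql huq
    have t1 := hconn.dist_triangle (u := a) (v := u) (w := y)
    have t2 := hconn.dist_triangle (u := b) (v := u) (w := x)
    have c1 : T.dist u b = T.dist b u := SimpleGraph.dist_comm ..
    have c2 : T.dist y b = T.dist b y := SimpleGraph.dist_comm ..
    have c3 : T.dist y u = T.dist u y := SimpleGraph.dist_comm ..
    omega
  set r : T.Walk a b := p.append (SimpleGraph.Walk.cons hxy q) with hr
  have hrsupp : r.support = p.support ++ q.support := by
    rw [hr, SimpleGraph.Walk.support_append, SimpleGraph.Walk.support_cons]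
    rfl
  have hrpath : r.IsPath := by
    rw [SimpleGraph.Walk.isPath_def, hrsupp]
    exact List.Nodup.append hp.support_nodup hq.support_nodup
      (List.disjoint_left.mpr hdisj)
  have hlen : r.length = p.length + (q.length + 1) := by
    rw [hr, SimpleGraph.Walk.length_append, SimpleGraph.Walk.length_cons]
  have := aux_path_len hT r hrpath
  omega

end Aux

/-- Let `T` be a minimal `G`-tree and `ℰ` a nonempty `G`-invariant
set of oriented edges.  Then there is no vertex from which every edge of `ℰ`
points away; equivalently, every vertex `v` has some edge of `ℰ` oriented
toward it. -/
theorem stmt5 {V : Type*} (T : SimpleGraph V) (hT : T.IsTree) (hinf : Infinite V)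
    (G : Type*) [Group G] [MulAction G V]
    (hact : ∀ (g : G) (x y : V), T.Adj x y → T.Adj (g • x) (g • y))
    (hnoinv : ∀ (g : G) (x y : V), T.Adj x y → ¬(g • x = y ∧ g • y = x))
    (hmin : IsMinimalGTree T G)
    (ℰ : Set (V × V)) (hedges : ∀ e ∈ ℰ, T.Adj e.1 e.2) (hne : ℰ.Nonempty)
    (hinv : ∀ (g : G), ∀ e ∈ ℰ, (g • e.1, g • e.2) ∈ ℰ) :
    ∀ v : V, ∃ e ∈ ℰ, EdgeTowardVertex T v e.1 e.2 := by
  have hconn := hT.isConnected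
  -- the action is by isometries
  have hdist_le : ∀ (g : G) (x y : V), T.dist (g • x) (g • y) ≤ T.dist x y := by
    intro g x y
    obtain ⟨p, hpl⟩ := (hconn x y).exists_walk_length_eq_dist
    let f : T →g T := ⟨fun z => g • z, fun h => hact g _ _ h⟩
    have := SimpleGraph.dist_le (p.map f)
    rwa [SimpleGraph.Walk.length_map, hpl] at this
  have hdist : ∀ (g : G) (x y : V), T.dist (g • x) (g • y) = T.dist x y := by
    intro g x y
    refine le_antisymm (hdist_le g x y) ?_
    have := hdist_le g⁻¹ (g • x) (g • y)
    simpa using this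
  intro v
  by_contra hcon
  push_neg at hcon
  -- every edge of ℰ points away from v
  set A : Set V := {w | ∀ e ∈ ℰ, T.dist w e.1 + 1 = T.dist w e.2} with hA
  have hvA : v ∈ A := by
    intro e he
    rcases aux_step hT (hedges e he) v with h | h
    · exact h
    · exact absurd h (hcon e he)
  -- A is G-invariant
  have hAinv : ∀ (g : G) (x : V), x ∈ A → g • x ∈ A := by
    intro g w hw e he
    have he' := hinv g⁻¹ e he
    have hthis : T.dist w (g⁻¹ • e.1) + 1 = T.dist w (g⁻¹ • e.2) := hw _ he'
    have h1 := hdist g w (g⁻¹ • e.1)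
    have h2 := hdist g w (g⁻¹ • e.2)
    simp only [smul_inv_smul] at h1 h2
    omega
  -- A is convex
  have hAconv : ∀ a b c : V, a ∈ A → c ∈ A →
      T.dist a b + T.dist b c = T.dist a c → b ∈ A := by
    intro a b c haA hcA habc e he
    have hadj := hedges e he
    rcases aux_step hT hadj b with h | h
    · exact h
    · exfalso
      have h1 := aux_cross hT hadj (haA e he) h
      have h2 := aux_cross hT hadj.symm h (hcA e he)
      have t := hconn.dist_triangle (u := a) (v := e.1) (w := c)
      have c1 : T.dist e.2 b = T.dist b e.2 := SimpleGraph.dist_comm ..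
      have c2 : T.dist e.1 c = T.dist c e.1 := SimpleGraph.dist_comm ..
      omega
  have hAuniv := hmin A ⟨v, hvA⟩ hAconv hAinv
  obtain ⟨e, he⟩ := hne
  have : e.2 ∈ A := hAuniv ▸ Set.mem_univ _
  have h := this e he
  rw [SimpleGraph.dist_self] at h
  omega
end

section
/- Let T be a cocompact G-tree, T̃ a minimal G-tree, and q : T̃ → T a G-equivariant tree morphism that is not locally injective. Then there exists at most one end E₀ of T such that no collapsing pair faces E₀; that is, any two distinct ends of T cannot both fail to be faced by a collapsing pair. -/
/-- Two geodesic rays represent the same end iff they eventually coincide. -/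
def RayEquiv {V : Type*} (τ σ : ℕ → V) : Prop :=
  ∃ k l : ℕ, ∀ n : ℕ, τ (k + n) = σ (l + n)

/-- A collapsing pair under `q` faces the end represented by the geodesic ray
`τ`: there are distinct edges `(p, w₁)`, `(p, w₂)` of `T̃` with `q w₁ = q w₂`
such that the ray from `q p` representing the end passes through the edge
`(q p, q w₁)`, i.e. eventually `d(q p, τ n) = d(q w₁, τ n) + 1`. -/
def CollapsingPairFacesRay {W V : Type*} (S : SimpleGraph W) (T : SimpleGraph V)
    (q : W → V) (τ : ℕ → V) : Prop :=
  ∃ p w₁ w₂ : W, S.Adj p w₁ ∧ S.Adj p w₂ ∧ w₁ ≠ w₂ ∧ q w₁ = q w₂ ∧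
    ∃ N : ℕ, ∀ n ≥ N, T.dist (q p) (τ n) = T.dist (q w₁) (τ n) + 1

namespace S9
open SimpleGraph Walk

variable {V : Type*} {T : SimpleGraph V}

/-- `m` lies between `x` and `y`. -/
def Btw (T : SimpleGraph V) (x m y : V) : Prop :=
  T.dist x m + T.dist m y = T.dist x y

lemma dcomm (T : SimpleGraph V) (u v : V) : T.dist u v = T.dist v u :=
  SimpleGraph.dist_comm

lemma btw_comm {x m y : V} (h : Btw T x m y) : Btw T y m x := by
  unfold Btw at *; rw [dcomm T y m, dcomm T m x, dcomm T y x]; omega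

section TreeLemmas
variable (hT : T.IsTree)
include hT

lemma dtri (u v w : V) : T.dist u w ≤ T.dist u v + T.dist v w :=
  hT.isConnected.dist_triangle

lemma dzero {u v : V} (h : T.dist u v = 0) : u = v :=
  (hT.isConnected.dist_eq_zero_iff).mp h

omit hT in
lemma adj_dist_one {u v : V} (h : T.Adj u v) : T.dist u v = 1 :=
  dist_eq_one_iff_adj.mpr h

lemma exists_geo (u v : V) : ∃ p : T.Walk u v, p.IsPath ∧ p.length = T.dist u v := by
  classical
  obtain ⟨p, hp⟩ := (hT.isConnected.preconnected u v).exists_walk_length_eq_dist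
  refine ⟨p.bypass, p.bypass_isPath, le_antisymm ?_ (dist_le _)⟩
  calc p.bypass.length ≤ p.length := p.length_bypass_le
  _ = T.dist u v := hp

lemma path_len {u v : V} {p : T.Walk u v} (hp : p.IsPath) : p.length = T.dist u v := by
  obtain ⟨q, hq, hql⟩ := exists_geo hT u v
  have h := hT.IsAcyclic.path_unique ⟨p, hp⟩ ⟨q, hq⟩
  rw [show p = q from congrArg Subtype.val h, hql]

lemma support_btw {u v w : V} {p : T.Walk u v} (hp : p.IsPath) (hw : w ∈ p.support) :
    Btw T u w v := by
  unfold Btw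
  induction p with
  | nil =>
    simp only [support_nil, List.mem_singleton] at hw
    subst hw; simp
  | @cons u u' v h p ih =>
    rcases List.mem_cons.mp (by simpa [support_cons] using hw) with h1 | h2
    · subst h1; simp
    · have hb := ih hp.of_cons h2
      have l1 : (Walk.cons h p).length = T.dist u v := path_len hT hp
      have l2 : p.length = T.dist u' v := path_len hT hp.of_cons
      have t1 : T.dist u w ≤ T.dist u u' + T.dist u' w := dtri hT _ _ _
      have t2 : T.dist u v ≤ T.dist u w + T.dist w v := dtri hT _ _ _
      have ha : T.dist u u' = 1 := adj_dist_one h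
      simp only [length_cons] at l1
      omega

omit hT in
lemma append_isPath {x m y : V} {p : T.Walk x m} {q : T.Walk m y}
    (hp : p.IsPath) (hq : q.IsPath)
    (hint : ∀ w, w ∈ p.support → w ∈ q.support → w = m) :
    (p.append q).IsPath := by
  rw [isPath_def, support_append]
  refine List.Nodup.append hp.support_nodup ?_ ?_
  · exact hq.support_nodup.tail
  · intro w hwp hwt
    have hwq : w ∈ q.support := List.mem_of_mem_tail hwt
    have hwm : w = m := hint w hwp hwq
    subst hwm
    have hnd := hq.support_nodup
    rw [q.support_eq_cons] at hnd
    exact (List.nodup_cons.mp hnd).1 hwt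

lemma btw_mem_support {u w v : V} (h : Btw T u w v) {p : T.Walk u v} (hp : p.IsPath) :
    w ∈ p.support := by
  obtain ⟨p₁, hp₁, hl₁⟩ := exists_geo hT u w
  obtain ⟨p₂, hp₂, hl₂⟩ := exists_geo hT w v
  have hint : ∀ z, z ∈ p₁.support → z ∈ p₂.support → z = w := by
    intro z h1 h2
    have b1 := support_btw hT hp₁ h1
    have b2 := support_btw hT hp₂ h2
    unfold Btw at b1 b2 h
    have t1 : T.dist u v ≤ T.dist u z + T.dist z v := dtri hT _ _ _
    have hc : T.dist z w = T.dist w z := dcomm ..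
    exact dzero hT (by omega)
  have hap := append_isPath hp₁ hp₂ hint
  have huniq := hT.IsAcyclic.path_unique ⟨p, hp⟩ ⟨p₁.append p₂, hap⟩
  rw [show p = p₁.append p₂ from congrArg Subtype.val huniq]
  rw [mem_support_append_iff]
  exact Or.inl p₁.end_mem_support

lemma dist_getVert_le {u v : V} (p : T.Walk u v) (i : ℕ) :
    T.dist u (p.getVert i) ≤ i := by
  induction p generalizing i with
  | nil => simp [Walk.getVert_of_length_le, SimpleGraph.dist_self]
  | @cons u u' v h p ih =>
    match i with
    | 0 => simp [Walk.getVert_zero, SimpleGraph.dist_self]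
    | (i + 1) =>
      have hih := ih i
      have t : T.dist u (p.getVert i) ≤ T.dist u u' + T.dist u' (p.getVert i) := dtri hT _ _ _
      have ha : T.dist u u' = 1 := adj_dist_one h
      rw [Walk.getVert_cons_succ]
      omega

omit hT in
lemma dist_getVert_suffix {u v : V} (p : T.Walk u v) (i : ℕ) :
    T.dist (p.getVert i) v ≤ p.length - i := by
  induction p generalizing i with
  | nil => simp [Walk.getVert_of_length_le, SimpleGraph.dist_self]
  | @cons u u' v h p ih =>
    match i with
    | 0 =>
      have hd := dist_le (Walk.cons h p)
      simp only [Walk.getVert_zero, Nat.sub_zero]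
      exact hd
    | (i + 1) =>
      have := ih i
      rw [Walk.getVert_cons_succ]
      simpa using this

lemma getVert_dist {u v : V} {p : T.Walk u v} (hp : p.IsPath) {i : ℕ} (hi : i ≤ p.length) :
    T.dist u (p.getVert i) = i ∧ T.dist (p.getVert i) v = p.length - i := by
  have h1 := dist_getVert_le hT p i
  have h2 := dist_getVert_suffix p i
  have t : T.dist u v ≤ T.dist u (p.getVert i) + T.dist (p.getVert i) v := dtri hT _ _ _
  have hl : p.length = T.dist u v := path_len hT hp
  omega

lemma btw_unique {u v w w' : V} (hw : Btw T u w v) (hw' : Btw T u w' v)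
    (he : T.dist u w = T.dist u w') : w = w' := by
  obtain ⟨p, hp, hl⟩ := exists_geo hT u v
  obtain ⟨i, hgi, hil⟩ := mem_support_iff_exists_getVert.mp (btw_mem_support hT hw hp)
  obtain ⟨j, hgj, hjl⟩ := mem_support_iff_exists_getVert.mp (btw_mem_support hT hw' hp)
  have di := (getVert_dist hT hp hil).1
  have dj := (getVert_dist hT hp hjl).1
  rw [hgi] at di; rw [hgj] at dj
  have hij : i = j := by omega
  rw [← hgi, ← hgj, hij]

lemma getVert_getVert_dist {u v : V} {p : T.Walk u v} (hp : p.IsPath) {i j : ℕ}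
    (hij : i ≤ j) (hjl : j ≤ p.length) :
    T.dist (p.getVert i) (p.getVert j) = j - i := by
  obtain ⟨q, hq, hlq⟩ := exists_geo hT (p.getVert i) v
  have hdi := getVert_dist hT hp (le_trans hij hjl)
  have hdj := getVert_dist hT hp hjl
  have hlq' : q.length = p.length - i := by rw [hlq, hdi.2]
  have hji : j - i ≤ q.length := by omega
  have hw := getVert_dist hT hq hji
  set w := q.getVert (j - i) with hwdef
  have hl : p.length = T.dist u v := path_len hT hp
  have t1 : T.dist u w ≤ T.dist u (p.getVert i) + T.dist (p.getVert i) w := dtri hT _ _ _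
  have t2 : T.dist u v ≤ T.dist u w + T.dist w v := dtri hT _ _ _
  have hbw : Btw T u w v := by unfold Btw; omega
  have hduw : T.dist u w = j := by omega
  have hbj : Btw T u (p.getVert j) v := by unfold Btw; omega
  have hwj : w = p.getVert j := btw_unique hT hbw hbj (by rw [hduw, hdj.1])
  rw [← hwj, hw.1]

lemma adj_dichotomy {a b : V} (hab : T.Adj a b) (w : V) :
    T.dist w b = T.dist w a + 1 ∨ T.dist w a = T.dist w b + 1 := by
  obtain ⟨p, hp, hl⟩ := exists_geo hT w a
  by_cases hb : b ∈ p.support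
  · right
    have hbt := support_btw hT hp hb
    unfold Btw at hbt
    have hba : T.dist b a = 1 := by rw [dcomm]; exact adj_dist_one hab
    omega
  · left
    have hcp : (p.concat hab).IsPath := by
      rw [isPath_def, support_concat]
      refine hp.support_nodup.append (List.nodup_singleton b) ?_
      intro w hw hwb
      rw [List.mem_singleton] at hwb
      subst hwb
      exact hb hw
    have hlen := path_len hT hcp
    rw [length_concat] at hlen
    omega

lemma median (x y z : V) :
    ∃ m : V, Btw T y m z ∧ Btw T x m y ∧ Btw T x m z := by
  classical
  obtain ⟨p, hp, hl⟩ := exists_geo hT y z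
  have hne : p.support.toFinset.Nonempty := ⟨y, by simp⟩
  obtain ⟨m, hmF, hmin⟩ := Finset.exists_min_image p.support.toFinset (fun w => T.dist x w) hne
  have hm : m ∈ p.support := by simpa using hmF
  have hmin' : ∀ w ∈ p.support, T.dist x m ≤ T.dist x w := fun w hw => hmin w (by simpa using hw)
  have hymz : Btw T y m z := support_btw hT hp hm
  have hbxm : ∀ t : V, Btw T m t y ∨ Btw T m t z → Btw T x m t → False → True := fun _ _ _ _ => trivial
  constructor
  case h =>
    refine ⟨hymz, ?_, ?_⟩
    · obtain ⟨q1, hq1, hlq1⟩ := exists_geo hT x m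
      obtain ⟨q2, hq2, hlq2⟩ := exists_geo hT m y
      have hint : ∀ w, w ∈ q1.support → w ∈ q2.support → w = m := by
        intro w h1 h2
        have b1 := support_btw hT hq1 h1
        have b2 := support_btw hT hq2 h2
        unfold Btw at b1 b2 hymz
        have t1 : T.dist y z ≤ T.dist y w + T.dist w z := dtri hT _ _ _
        have t2 : T.dist w z ≤ T.dist w m + T.dist m z := dtri hT _ _ _
        have c1 : T.dist w m = T.dist m w := dcomm ..
        have c2 : T.dist w y = T.dist y w := dcomm ..
        have c3 : T.dist m y = T.dist y m := dcomm ..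
        have hws : Btw T y w z := by unfold Btw; omega
        have hle := hmin' w (btw_mem_support hT hws hp)
        exact dzero hT (by rw [dcomm]; omega)
      have hap := append_isPath hq1 hq2 hint
      have hlen := path_len hT hap
      rw [length_append, hlq1, hlq2] at hlen
      exact hlen
    · obtain ⟨q1, hq1, hlq1⟩ := exists_geo hT x m
      obtain ⟨q2, hq2, hlq2⟩ := exists_geo hT m z
      have hint : ∀ w, w ∈ q1.support → w ∈ q2.support → w = m := by
        intro w h1 h2
        have b1 := support_btw hT hq1 h1
        have b2 := support_btw hT hq2 h2
        unfold Btw at b1 b2 hymz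
        have t1 : T.dist y z ≤ T.dist y w + T.dist w z := dtri hT _ _ _
        have t2 : T.dist y w ≤ T.dist y m + T.dist m w := dtri hT _ _ _
        have c1 : T.dist w m = T.dist m w := dcomm ..
        have c2 : T.dist w z = T.dist z w := dcomm ..
        have c3 : T.dist m z = T.dist z m := dcomm ..
        have hws : Btw T y w z := by unfold Btw; omega
        have hle := hmin' w (btw_mem_support hT hws hp)
        exact dzero hT (by rw [dcomm]; omega)
      have hap := append_isPath hq1 hq2 hint
      have hlen := path_len hT hap
      rw [length_append, hlq1, hlq2] at hlen
      exact hlen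


lemma crossing {a b u v : V} (hab : T.Adj a b) (huv : T.Adj u v)
    (hu : T.dist u b = T.dist u a + 1) (hv : T.dist v a = T.dist v b + 1) :
    u = a ∧ v = b := by
  have duv : T.dist u v = 1 := adj_dist_one huv
  have dab : T.dist a b = 1 := adj_dist_one hab
  obtain ⟨m, hm1, hm2, hm3⟩ := median hT a u v
  obtain ⟨m', hn1, hn2, hn3⟩ := median hT b u v
  unfold Btw at hm1 hm2 hm3 hn1 hn2 hn3
  have cua : T.dist u a = T.dist a u := dcomm ..
  have cub : T.dist u b = T.dist b u := dcomm ..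
  have cva : T.dist v a = T.dist a v := dcomm ..
  have cvb : T.dist v b = T.dist b v := dcomm ..
  -- m ∈ {u, v}
  have hmcase : m = u ∨ m = v := by
    rcases Nat.eq_zero_or_pos (T.dist u m) with h0 | hpos
    · exact Or.inl (dzero hT h0).symm
    · right
      have : T.dist m v = 0 := by omega
      exact dzero hT this
  have hmu : m = u := by
    rcases hmcase with h | h
    · exact h
    · exfalso
      rw [h] at hm1 hm2 hm3
      have cvu : T.dist v u = T.dist u v := dcomm ..
      have hmcase' : m' = u ∨ m' = v := by
        rcases Nat.eq_zero_or_pos (T.dist u m') with h0 | hpos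
        · exact Or.inl (dzero hT h0).symm
        · right
          have : T.dist m' v = 0 := by omega
          exact dzero hT this
      rcases hmcase' with h' | h' <;> rw [h'] at hn1 hn2 hn3 <;> omega
  rw [hmu] at hm1 hm2 hm3
  have hmcase' : m' = u ∨ m' = v := by
    rcases Nat.eq_zero_or_pos (T.dist u m') with h0 | hpos
    · exact Or.inl (dzero hT h0).symm
    · right
      have : T.dist m' v = 0 := by omega
      exact dzero hT this
  have hmv : m' = v := by
    rcases hmcase' with h' | h'
    · exfalso; rw [h'] at hn1 hn2 hn3; omega
    · exact h'
  rw [hmv] at hn1 hn2 hn3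
  -- now: Btw a u v (hm3) and b between a and v
  set α := T.dist u a with hα
  have hdav : T.dist a v = α + 1 := by omega
  have hbav : Btw T a b v := by unfold Btw; omega
  have huav : Btw T a u v := by unfold Btw; omega
  rcases Nat.eq_zero_or_pos α with h0 | hpos
  · constructor
    · exact dzero hT (by omega)
    · exact (dzero hT (by omega)).symm
  · exfalso
    obtain ⟨p, hp, hl⟩ := exists_geo hT a v
    obtain ⟨i, hgi, hil⟩ := mem_support_iff_exists_getVert.mp (btw_mem_support hT huav hp)
    obtain ⟨j, hgj, hjl⟩ := mem_support_iff_exists_getVert.mp (btw_mem_support hT hbav hp)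
    have di := (getVert_dist hT hp hil).1
    have dj := (getVert_dist hT hp hjl).1
    rw [hgi] at di; rw [hgj] at dj
    have hieq : i = α := by omega
    have hjeq : j = 1 := by omega
    have hge : T.dist (p.getVert j) (p.getVert i) = i - j := by
      apply getVert_getVert_dist hT hp (by omega) hil
    rw [hgi, hgj] at hge
    have : T.dist b u = T.dist u b := dcomm ..
    omega

end TreeLemmas

section Ray

/-- The canonical walk along a ray. -/
def rayWalk (T : SimpleGraph V) (τ : ℕ → V) (hadj : ∀ n, T.Adj (τ n) (τ (n + 1))) (m : ℕ) :
    (k : ℕ) → T.Walk (τ m) (τ (m + k))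
  | 0 => Walk.nil
  | (k+1) => (rayWalk T τ hadj m k).concat (hadj (m + k))

lemma rayWalk_length (τ : ℕ → V) (hadj : ∀ n, T.Adj (τ n) (τ (n + 1))) (m k : ℕ) :
    (rayWalk T τ hadj m k).length = k := by
  induction k with
  | zero => rfl
  | succ k ih => rw [rayWalk, length_concat, ih]

lemma rayWalk_support (τ : ℕ → V) (hadj : ∀ n, T.Adj (τ n) (τ (n + 1))) (m k : ℕ) :
    ∀ w ∈ (rayWalk T τ hadj m k).support, ∃ j ≤ k, w = τ (m + j) := by
  induction k with
  | zero =>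
    intro w hw
    simp only [rayWalk, support_nil, List.mem_singleton] at hw
    exact ⟨0, le_refl 0, hw⟩
  | succ k ih =>
    intro w hw
    rw [rayWalk, support_concat, List.mem_append] at hw
    rcases hw with hw | hw
    · obtain ⟨j, hj, he⟩ := ih w hw
      exact ⟨j, by omega, he⟩
    · rw [List.mem_singleton] at hw
      exact ⟨k + 1, le_refl _, hw⟩

lemma rayWalk_isPath (τ : ℕ → V) (hτ : IsGeodRay T τ) (m k : ℕ) :
    (rayWalk T τ hτ.1 m k).IsPath := by
  induction k with
  | zero => exact IsPath.nil
  | succ k ih =>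
    rw [rayWalk, isPath_def, support_concat]
    refine ih.support_nodup.append (List.nodup_singleton _) ?_
    intro w hw hwmem
    rw [List.mem_singleton] at hwmem
    subst hwmem
    obtain ⟨j, hj, he⟩ := rayWalk_support τ hτ.1 m k _ hw
    have := hτ.2 he.symm
    omega

lemma ray_dist (hT : T.IsTree) {τ : ℕ → V} (hτ : IsGeodRay T τ) {m n : ℕ} (hmn : m ≤ n) :
    T.dist (τ m) (τ n) = n - m := by
  obtain ⟨k, rfl⟩ := Nat.exists_eq_add_of_le hmn
  have h := path_len hT (rayWalk_isPath τ hτ m k)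
  rw [rayWalk_length] at h
  omega

lemma bus_exists (hT : T.IsTree) {τ : ℕ → V} (hτ : IsGeodRay T τ) (x : V) :
    ∃ c : ℤ, (∃ N : ℕ, ∀ n ≥ N, (T.dist x (τ n) : ℤ) = n + c) ∧
      (∀ n : ℕ, (n : ℤ) + c ≤ (T.dist x (τ n) : ℤ)) := by
  set a : ℕ → ℤ := fun n => (T.dist x (τ n) : ℤ) - n with ha
  have hanti : ∀ n m, n ≤ m → a m ≤ a n := by
    intro n m hnm
    induction m, hnm using Nat.le_induction with
    | base => exact le_refl _
    | succ m hm ih =>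
      refine le_trans ?_ ih
      have h1 : T.dist x (τ (m+1)) ≤ T.dist x (τ m) + T.dist (τ m) (τ (m+1)) := dtri hT _ _ _
      have h2 : T.dist (τ m) (τ (m+1)) = 1 := adj_dist_one (hτ.1 m)
      simp only [ha]
      push_cast
      omega
  have hbdd : ∀ n, -(T.dist x (τ 0) : ℤ) ≤ a n := by
    intro n
    have h1 : T.dist (τ 0) (τ n) = n := by simpa using ray_dist hT hτ (Nat.zero_le n)
    have h2 : T.dist (τ 0) (τ n) ≤ T.dist (τ 0) x + T.dist x (τ n) := dtri hT _ _ _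
    have h3 : T.dist (τ 0) x = T.dist x (τ 0) := dcomm ..
    simp only [ha]
    omega
  obtain ⟨lb, ⟨N, hN⟩, hlb⟩ := Int.exists_least_of_bdd
    (P := fun z => ∃ n, a n = z) ⟨-(T.dist x (τ 0) : ℤ), by rintro z ⟨n, rfl⟩; exact hbdd n⟩
    ⟨a 0, 0, rfl⟩
  refine ⟨lb, ⟨N, ?_⟩, ?_⟩
  · intro n hn
    have h1 : a n ≤ a N := hanti N n hn
    have h2 : lb ≤ a n := hlb _ ⟨n, rfl⟩
    have : a n = lb := by omega
    simp only [ha] at this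
    omega
  · intro n
    have h2 : lb ≤ a n := hlb _ ⟨n, rfl⟩
    simp only [ha] at h2
    omega

end Ray
lemma flip_exists {P : ℕ → Prop} {n m : ℕ} (hnm : n ≤ m) (h1 : P n) (h2 : ¬ P m) :
    ∃ j, n ≤ j ∧ j < m ∧ P j ∧ ¬ P (j + 1) := by
  induction m with
  | zero => exact absurd (Nat.le_zero.mp hnm ▸ h1) h2
  | succ m ih =>
    have hn : n ≤ m := by
      rcases Nat.eq_or_lt_of_le hnm with h | h
      · exact absurd (h ▸ h1) h2
      · omega
    by_cases hm : P m
    · exact ⟨m, hn, Nat.lt_succ_self m, hm, h2⟩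
    · obtain ⟨j, hj1, hj2, hj3, hj4⟩ := ih hn hm
      exact ⟨j, hj1, by omega, hj3, hj4⟩

lemma eventual_side (hT : T.IsTree) {τ : ℕ → V} (hτ : IsGeodRay T τ) {a b : V} (hab : T.Adj a b)
    (hnot : ¬ ∃ N, ∀ n ≥ N, T.dist (τ n) b = T.dist (τ n) a + 1) :
    ∃ N, ∀ n ≥ N, T.dist (τ n) a = T.dist (τ n) b + 1 := by
  by_contra hno2
  push_neg at hnot hno2
  set P : ℕ → Prop := fun n => T.dist (τ n) b = T.dist (τ n) a + 1 with hP
  set Q : ℕ → Prop := fun n => T.dist (τ n) a = T.dist (τ n) b + 1 with hQ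
  have hdich : ∀ n, P n ∨ Q n := fun n => adj_dichotomy hT hab (τ n)
  have hPn : ∀ n, ¬ P n → Q n := by
    intro n h; rcases hdich n with h' | h'; exact absurd h' h; exact h'
  have hQn : ∀ n, ¬ Q n → P n := by
    intro n h; rcases hdich n with h' | h'; exact h'; exact absurd h' h
  have hPQ : ∀ n, P n → ¬ Q n := by
    intro n h hq; simp only [hP, hQ] at h hq; omega
  obtain ⟨n₁, -, hn₁⟩ := hno2 0
  have hPn₁ : P n₁ := hQn n₁ (by simpa [hQ] using hn₁)
  obtain ⟨n₂, hn₂ge, hn₂⟩ := hnot n₁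
  have hQn₂ : Q n₂ := hPn n₂ (by simpa [hP] using hn₂)
  obtain ⟨n₃, hn₃ge, hn₃⟩ := hno2 n₂
  have hPn₃ : P n₃ := hQn n₃ (by simpa [hQ] using hn₃)
  obtain ⟨j₁, hj₁n, hj₁m, hj₁P, hj₁nP⟩ := flip_exists hn₂ge hPn₁ (hPQ n₂ |> fun f => fun hp => f hp hQn₂)
  have hQj₁ : Q (j₁ + 1) := hPn _ hj₁nP
  obtain ⟨j₂, hj₂n, hj₂m, hj₂Q, hj₂nQ⟩ := flip_exists hn₃ge hQn₂ (fun hq => hPQ n₃ hPn₃ hq)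
  have hPj₂ : P (j₂ + 1) := hQn _ hj₂nQ
  have hc₁ := crossing hT hab (hτ.1 j₁) hj₁P hQj₁
  have hc₂ := crossing hT hab.symm (hτ.1 j₂) hj₂Q hPj₂
  -- τ j₁ = a, τ (j₁+1) = b, τ j₂ = b, τ (j₂+1) = a
  have e1 : j₂ = j₁ + 1 := hτ.2 (hc₂.1.trans hc₁.2.symm)
  have e2 : j₂ + 1 = j₁ := hτ.2 (hc₂.2.trans hc₁.1.symm)
  omega

/-- A Busemann function for the ray `τ`. -/
def BusSpec (T : SimpleGraph V) (τ : ℕ → V) (bus : V → ℤ) : Prop :=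
  ∀ x : V, (∃ N, ∀ n ≥ N, (T.dist x (τ n) : ℤ) = n + bus x) ∧
    ∀ n : ℕ, (n : ℤ) + bus x ≤ (T.dist x (τ n) : ℤ)

lemma busSpec_exists (hT : T.IsTree) {τ : ℕ → V} (hτ : IsGeodRay T τ) :
    ∃ bus : V → ℤ, BusSpec T τ bus := by
  have h := fun x => bus_exists hT hτ x
  choose bus h1 h2 using h
  exact ⟨bus, fun x => ⟨h1 x, h2 x⟩⟩

lemma bus_adj (hT : T.IsTree) {τ : ℕ → V} {bus : V → ℤ} (hb : BusSpec T τ bus)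
    {u v : V} (huv : T.Adj u v) :
    bus v = bus u + 1 ∨ bus u = bus v + 1 := by
  obtain ⟨Nu, hNu⟩ := (hb u).1
  obtain ⟨Nv, hNv⟩ := (hb v).1
  set n := max Nu Nv
  have h1 := hNu n (le_max_left _ _)
  have h2 := hNv n (le_max_right _ _)
  have h3 := adj_dichotomy hT huv (τ n)
  have c1 : T.dist (τ n) u = T.dist u (τ n) := dcomm ..
  have c2 : T.dist (τ n) v = T.dist v (τ n) := dcomm ..
  rcases h3 with h | h
  · left; rw [c1, c2] at h; omega
  · right; rw [c1, c2] at h; omega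

lemma bus_desc_unique (hT : T.IsTree) {τ : ℕ → V} {bus : V → ℤ} (hb : BusSpec T τ bus)
    {x u₁ u₂ : V} (h1 : T.Adj x u₁) (h2 : T.Adj x u₂)
    (hd1 : bus u₁ = bus x - 1) (hd2 : bus u₂ = bus x - 1) : u₁ = u₂ := by
  obtain ⟨Nx, hNx⟩ := (hb x).1
  obtain ⟨N1, hN1⟩ := (hb u₁).1
  obtain ⟨N2, hN2⟩ := (hb u₂).1
  set n := max Nx (max N1 N2)
  have e0 := hNx n (le_max_left _ _)
  have e1 := hN1 n (le_trans (le_max_left _ _) (le_max_right _ _))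
  have e2 := hN2 n (le_trans (le_max_right _ _) (le_max_right _ _))
  have b1 : Btw T x u₁ (τ n) := by
    unfold Btw
    have := adj_dist_one h1
    omega
  have b2 : Btw T x u₂ (τ n) := by
    unfold Btw
    have := adj_dist_one h2
    omega
  exact btw_unique hT b1 b2 (by rw [adj_dist_one h1, adj_dist_one h2])

lemma sigma_bounded (hT : T.IsTree) {τ₁ τ₂ : ℕ → V} (h1 : IsGeodRay T τ₁) (h2 : IsGeodRay T τ₂)
    {bus2 : V → ℤ} (hb2 : BusSpec T τ₂ bus2)
    (hne : ¬ RayEquiv τ₁ τ₂) :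
    ∃ B : ℤ, ∀ n n' : ℕ, (n : ℤ) + n' - T.dist (τ₁ n) (τ₂ n') ≤ B := by
  set φ : ℕ → ℤ := fun n => bus2 (τ₁ n) with hφ
  by_cases hinc : ∃ n₀ : ℕ, φ (n₀ + 1) = φ n₀ + 1
  · obtain ⟨n₀, hn₀⟩ := hinc
    have hpers : ∀ k, n₀ ≤ k → φ (k + 1) = φ k + 1 := by
      intro k hk
      induction k, hk using Nat.le_induction with
      | base => exact hn₀
      | succ k hk ih =>
        rcases bus_adj hT hb2 (h1.1 (k + 1)) with h | h
        · exact h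
        · exfalso
          have hda : T.Adj (τ₁ (k+1)) (τ₁ k) := (h1.1 k).symm
          have hdb : T.Adj (τ₁ (k+1)) (τ₁ (k+2)) := h1.1 (k+1)
          have hne12 : τ₁ k ≠ τ₁ (k + 2) := fun hcon => by
            have := h1.2 hcon; omega
          have ih' : bus2 (τ₁ (k+1)) = bus2 (τ₁ k) + 1 := ih
          have h' : bus2 (τ₁ (k+1)) = bus2 (τ₁ (k+2)) + 1 := h
          exact hne12 (bus_desc_unique hT hb2 hda hdb (by omega) (by omega))
    have hlin : ∀ k, n₀ ≤ k → φ k = φ n₀ + (k - n₀ : ℕ) := by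
      intro k hk
      induction k, hk using Nat.le_induction with
      | base => simp
      | succ k hk ih =>
        rw [hpers k hk, ih]
        push_cast
        omega
    have hlip : ∀ k l : ℕ, k ≤ l → φ l ≤ φ k + (l - k : ℕ) := by
      intro k l hkl
      induction l, hkl using Nat.le_induction with
      | base => simp
      | succ l hl ih =>
        have := bus_adj hT hb2 (h1.1 l)
        have h3 : φ (l + 1) ≤ φ l + 1 := by
          simp only [hφ] at this ⊢
          omega
        push_cast at ih ⊢
        omega
    refine ⟨(n₀ : ℤ) - φ n₀, ?_⟩
    intro n n'
    have hlow := (hb2 (τ₁ n)).2 n'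
    have key : (n : ℤ) - φ n ≤ (n₀ : ℤ) - φ n₀ := by
      rcases le_total n₀ n with h | h
      · have := hlin n h
        push_cast at this
        omega
      · have := hlip n n₀ h
        push_cast at this
        omega
    simp only [hφ] at key ⊢
    omega
  · exfalso
    push_neg at hinc
    have hdec : ∀ n, φ (n + 1) = φ n - 1 := by
      intro n
      rcases bus_adj hT hb2 (h1.1 n) with h | h
      · exact absurd h (hinc n)
      · simp only [hφ] at h ⊢; omega
    have hval : ∀ j : ℕ, φ j = φ 0 - j := by
      intro j
      induction j with
      | zero => simp
      | succ j ih => rw [hdec j, ih]; push_cast; omega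
    set c : ℤ := φ 0 with hc
    obtain ⟨M₀, hM₀⟩ := (hb2 (τ₁ 0)).1
    set M₁ : ℕ := max M₀ (-c).toNat with hM₁
    have hMc : (M₁ : ℤ) + c ≥ 0 := by
      have : ((-c).toNat : ℤ) ≤ (M₁ : ℤ) := by exact_mod_cast le_max_right M₀ (-c).toNat
      omega
    have claim : ∀ m : ℕ, M₁ ≤ m → ∀ j : ℕ, (j : ℤ) ≤ (m : ℤ) + c →
        (T.dist (τ₁ j) (τ₂ m) : ℤ) = (m : ℤ) + c - j := by
      intro m hm
      intro j
      induction j with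
      | zero =>
        intro _
        have := hM₀ m (le_trans (le_max_left _ _) hm)
        simpa using this
      | succ j ih =>
        intro hj
        have hdj : (T.dist (τ₁ j) (τ₂ m) : ℤ) = (m : ℤ) + c - j := ih (by omega)
        have hpos : 0 < T.dist (τ₁ j) (τ₂ m) := by omega
        obtain ⟨p, hp, hl⟩ := exists_geo hT (τ₁ j) (τ₂ m)
        have hlpos : 0 < p.length := by omega
        set u := p.getVert 1 with hu
        have hadjU : T.Adj (τ₁ j) u := by
          have := p.adj_getVert_succ hlpos
          simpa [Walk.getVert_zero] using this
        have hdu : T.dist u (τ₂ m) = p.length - 1 := (getVert_dist hT hp (by omega)).2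
        have hdesc : bus2 (τ₁ (j + 1)) = bus2 (τ₁ j) - 1 := by
          have := hdec j
          simp only [hφ] at this
          omega
        have hueq : u = τ₁ (j + 1) := by
          by_contra hneu
          have : bus2 u = bus2 (τ₁ j) - 1 ∨ bus2 u = bus2 (τ₁ j) + 1 := by
            rcases bus_adj hT hb2 hadjU with h | h
            · right; omega
            · left; omega
          rcases this with h | h
          · exact hneu (bus_desc_unique hT hb2 hadjU (h1.1 j) h hdesc)
          · have hlow := (hb2 u).2 m
            have hφj := hval j
            rw [h] at hlow
            have : (T.dist u (τ₂ m) : ℤ) = (m : ℤ) + c - j - 1 := by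
              rw [hdu]
              push_cast
              omega
            simp only [hφ] at hφj
            omega
        rw [← hueq]
        rw [hdu]
        push_cast
        omega
    apply hne
    refine ⟨(((M₁ : ℤ)) + c).toNat, M₁, ?_⟩
    intro n
    have h1m : M₁ ≤ M₁ + n := by omega
    have hj : ((((M₁ : ℤ) + c).toNat + n : ℕ) : ℤ) ≤ ((M₁ + n : ℕ) : ℤ) + c := by
      push_cast
      omega
    have := claim (M₁ + n) h1m (((M₁ : ℤ) + c).toNat + n) hj
    have hz : (T.dist (τ₁ (((M₁ : ℤ) + c).toNat + n)) (τ₂ (M₁ + n)) : ℤ) = 0 := by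
      rw [this]
      push_cast
      omega
    have : T.dist (τ₁ (((M₁ : ℤ) + c).toNat + n)) (τ₂ (M₁ + n)) = 0 := by exact_mod_cast hz
    exact dzero hT this

lemma bus_lip (hT : T.IsTree) {τ : ℕ → V} {bus : V → ℤ} (hb : BusSpec T τ bus) (x y : V) :
    bus x ≤ bus y + T.dist x y := by
  obtain ⟨Nx, hNx⟩ := (hb x).1
  obtain ⟨Ny, hNy⟩ := (hb y).1
  set n := max Nx Ny
  have e1 := hNx n (le_max_left _ _)
  have e2 := hNy n (le_max_right _ _)
  have t : T.dist x (τ n) ≤ T.dist x y + T.dist y (τ n) := dtri hT _ _ _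
  omega

lemma sigma_min_exists (hT : T.IsTree) {τ₁ τ₂ : ℕ → V}
    {bus1 bus2 : V → ℤ} (hb1 : BusSpec T τ₁ bus1) (hb2 : BusSpec T τ₂ bus2)
    {B : ℤ} (hB : ∀ n n' : ℕ, (n : ℤ) + n' - T.dist (τ₁ n) (τ₂ n') ≤ B) :
    ∃ z : V, ∀ x : V, bus1 z + bus2 z ≤ bus1 x + bus2 x := by
  have hlb : ∀ x : V, -B ≤ bus1 x + bus2 x := by
    intro x
    obtain ⟨N1, hN1⟩ := (hb1 x).1
    obtain ⟨N2, hN2⟩ := (hb2 x).1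
    have e1 := hN1 N1 (le_refl _)
    have e2 := hN2 N2 (le_refl _)
    have t : T.dist (τ₁ N1) (τ₂ N2) ≤ T.dist (τ₁ N1) x + T.dist x (τ₂ N2) := dtri hT _ _ _
    have c : T.dist (τ₁ N1) x = T.dist x (τ₁ N1) := dcomm ..
    have := hB N1 N2
    omega
  have hx0 : ∃ x : V, True := by
    obtain ⟨p, -, -⟩ := exists_geo hT (τ₁ 0) (τ₁ 0)
    exact ⟨τ₁ 0, trivial⟩
  obtain ⟨lb, ⟨z, hzeq⟩, hlbmin⟩ := Int.exists_least_of_bdd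
    (P := fun w => ∃ x : V, bus1 x + bus2 x = w)
    ⟨-B, by rintro w ⟨x, rfl⟩; exact hlb x⟩ ⟨bus1 (τ₁ 0) + bus2 (τ₁ 0), τ₁ 0, rfl⟩
  refine ⟨z, fun x => ?_⟩
  rw [hzeq]
  exact hlbmin _ ⟨x, rfl⟩

lemma bus_step_down (hT : T.IsTree) {τ : ℕ → V} {bus : V → ℤ} (hb : BusSpec T τ bus)
    {z a z₁ : V}
    (hA : bus a - bus z + 1 ≤ (T.dist z a : ℤ))
    (hz₁ : Btw T z z₁ a) (hd1 : T.dist z z₁ = 1) :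
    bus z₁ = bus z - 1 := by
  obtain ⟨Nz, hNz⟩ := (hb z).1
  obtain ⟨N1, hN1⟩ := (hb z₁).1
  obtain ⟨Na, hNa⟩ := (hb a).1
  set n := max Nz (max N1 Na) with hn
  have ez := hNz n (le_max_left _ _)
  have e1 := hN1 n (le_trans (le_max_left _ _) (le_max_right _ _))
  have ea := hNa n (le_trans (le_max_right _ _) (le_max_right _ _))
  obtain ⟨m, hm1, hm2, hm3⟩ := median hT (τ n) z a
  -- hm1 : Btw z m a, hm2 : Btw (τ n) m z, hm3 : Btw (τ n) m a
  unfold Btw at hm1 hm2 hm3 hz₁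
  rcases Nat.eq_zero_or_pos (T.dist z m) with h0 | hpos
  · exfalso
    have hmz : m = z := (dzero hT h0).symm
    rw [hmz] at hm3
    have c1 : T.dist (τ n) z = T.dist z (τ n) := dcomm ..
    have c2 : T.dist (τ n) a = T.dist a (τ n) := dcomm ..
    have c3 : T.dist a (τ n) = T.dist a (τ n) := rfl
    -- d(τn,z) + d(z,a) = d(τn,a)
    omega
  · -- m on the geodesic z → a at position ≥ 1
    obtain ⟨p, hp, hl⟩ := exists_geo hT z a
    have hmem1 : z₁ ∈ p.support := btw_mem_support hT hz₁ hp
    have hmemm : m ∈ p.support := btw_mem_support hT hm1 hp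
    obtain ⟨i, hgi, hil⟩ := mem_support_iff_exists_getVert.mp hmem1
    obtain ⟨k, hgk, hkl⟩ := mem_support_iff_exists_getVert.mp hmemm
    have di := (getVert_dist hT hp hil).1
    have dk := (getVert_dist hT hp hkl).1
    rw [hgi] at di
    rw [hgk] at dk
    have hi1 : i = 1 := by omega
    have hk1 : 1 ≤ k := by omega
    have hdz₁m : T.dist z₁ m = k - 1 := by
      have := getVert_getVert_dist hT hp (by omega : i ≤ k) hkl
      rw [hgi, hgk] at this
      omega
    -- Btw z z₁ m, then Btw z z₁ (τ n)
    have t1 : T.dist z (τ n) ≤ T.dist z z₁ + T.dist z₁ (τ n) := dtri hT _ _ _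
    have t2 : T.dist z₁ (τ n) ≤ T.dist z₁ m + T.dist m (τ n) := dtri hT _ _ _
    have c1 : T.dist (τ n) m = T.dist m (τ n) := dcomm ..
    have c2 : T.dist (τ n) z = T.dist z (τ n) := dcomm ..
    have c3 : T.dist m z = T.dist z m := dcomm ..
    have hkey : T.dist z₁ (τ n) = T.dist z (τ n) - 1 := by omega
    have hge1 : 1 ≤ T.dist z (τ n) := by omega
    omega

lemma side_min (hT : T.IsTree) {τ₁ τ₂ : ℕ → V}
    {bus1 bus2 : V → ℤ} (hb1 : BusSpec T τ₁ bus1) (hb2 : BusSpec T τ₂ bus2)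
    {z : V} (hz : ∀ x : V, bus1 z + bus2 z ≤ bus1 x + bus2 x)
    {a b : V} (hab : T.Adj a b)
    (h1 : bus1 b = bus1 a + 1) (h2 : bus2 b = bus2 a + 1) :
    T.dist z b = T.dist z a + 1 := by
  rcases adj_dichotomy hT hab z with h | h
  · exact h
  · exfalso
    have hlip1 : bus1 b ≤ bus1 z + T.dist b z := bus_lip hT hb1 b z
    have hlip2 : bus2 b ≤ bus2 z + T.dist b z := bus_lip hT hb2 b z
    have cbz : T.dist b z = T.dist z b := dcomm ..
    have hA1 : bus1 a - bus1 z + 1 ≤ (T.dist z a : ℤ) := by push_cast; omega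
    have hA2 : bus2 a - bus2 z + 1 ≤ (T.dist z a : ℤ) := by push_cast; omega
    have hpos : 0 < T.dist z a := by omega
    obtain ⟨p, hp, hl⟩ := exists_geo hT z a
    set z₁ := p.getVert 1 with hz₁def
    have hgv := getVert_dist hT hp (by omega : 1 ≤ p.length)
    have hbtw : Btw T z z₁ a := by
      unfold Btw
      rw [hgv.1, hgv.2]
      omega
    have hdzz₁ : T.dist z z₁ = 1 := hgv.1
    have hd1 := bus_step_down hT hb1 hA1 hbtw hdzz₁
    have hd2 := bus_step_down hT hb2 hA2 hbtw hdzz₁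
    have := hz z₁
    omega

section Main

theorem main_aux {W V : Type*} (S : SimpleGraph W) (T : SimpleGraph V)
    (hS : S.IsTree) (hT : T.IsTree)
    (G : Type*) [Group G] [MulAction G W] [MulAction G V]
    (hactS : ∀ (g : G) (x y : W), S.Adj x y → S.Adj (g • x) (g • y))
    (hactT : ∀ (g : G) (x y : V), T.Adj x y → T.Adj (g • x) (g • y))
    (hmin : ∀ A : Set W, A.Nonempty →
      (∀ a b c : W, a ∈ A → c ∈ A → S.dist a b + S.dist b c = S.dist a c → b ∈ A) →
      (∀ (g : G) (x : W), x ∈ A → g • x ∈ A) → A = Set.univ)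
    (q : W → V) (hq : ∀ a b : W, S.Adj a b → T.Adj (q a) (q b))
    (hequiv : ∀ (g : G) (w : W), q (g • w) = g • q w)
    (hnotlocinj : ¬ ∀ (w a b : W), S.Adj w a → S.Adj w b → q a = q b → a = b)
    (τ₁ τ₂ : ℕ → V) (hτ₁ : IsGeodRay T τ₁) (hτ₂ : IsGeodRay T τ₂)
    (hneq : ¬ RayEquiv τ₁ τ₂)
    (hF1 : ¬ ∃ p w₁ w₂ : W, S.Adj p w₁ ∧ S.Adj p w₂ ∧ w₁ ≠ w₂ ∧ q w₁ = q w₂ ∧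
      ∃ N : ℕ, ∀ n ≥ N, T.dist (q p) (τ₁ n) = T.dist (q w₁) (τ₁ n) + 1)
    (hF2 : ¬ ∃ p w₁ w₂ : W, S.Adj p w₁ ∧ S.Adj p w₂ ∧ w₁ ≠ w₂ ∧ q w₁ = q w₂ ∧
      ∃ N : ℕ, ∀ n ≥ N, T.dist (q p) (τ₂ n) = T.dist (q w₁) (τ₂ n) + 1) :
    False := by
  classical
  push_neg at hnotlocinj
  obtain ⟨p₀, a₀, b₀, hp₀a, hp₀b, hqab, hab₀⟩ := hnotlocinj
  push_neg at hF1 hF2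
  -- Busemann functions
  obtain ⟨bus1, hb1⟩ := busSpec_exists hT hτ₁
  obtain ⟨bus2, hb2⟩ := busSpec_exists hT hτ₂
  -- the action preserves distances in T
  have dist_smul : ∀ (g : G) (x y : V), T.dist (g • x) (g • y) = T.dist x y := by
    have hle : ∀ (g : G) (x y : V), T.dist (g • x) (g • y) ≤ T.dist x y := by
      intro g x y
      obtain ⟨p, hp, hl⟩ := exists_geo hT x y
      have h2 := dist_le (p.map (⟨fun v => g • v, fun h => hactT g _ _ h⟩ : T →g T))
      rw [Walk.length_map, hl] at h2
      exact h2
    intro g x y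
    refine le_antisymm (hle g x y) ?_
    have := hle g⁻¹ (g • x) (g • y)
    simpa [inv_smul_smul] using this
  -- every collapsing pair increases both Busemann functions
  have pair_side : ∀ p w₁ w₂ : W, S.Adj p w₁ → S.Adj p w₂ → w₁ ≠ w₂ → q w₁ = q w₂ →
      bus1 (q w₁) = bus1 (q p) + 1 ∧ bus2 (q w₁) = bus2 (q p) + 1 := by
    intro p w₁ w₂ h1 h2 h3 h4
    have hadj : T.Adj (q w₁) (q p) := (hq p w₁ h1).symm
    constructor
    · have hnot : ¬ ∃ N, ∀ n ≥ N, T.dist (τ₁ n) (q p) = T.dist (τ₁ n) (q w₁) + 1 := by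
        rintro ⟨N, hN⟩
        obtain ⟨n, hn, hne⟩ := hF1 p w₁ w₂ h1 h2 h3 h4 N
        refine hne ?_
        rw [dcomm T (q p) (τ₁ n), dcomm T (q w₁) (τ₁ n)]
        exact hN n hn
      obtain ⟨N, hN⟩ := eventual_side hT hτ₁ hadj hnot
      obtain ⟨N1, hN1⟩ := (hb1 (q w₁)).1
      obtain ⟨N2, hN2⟩ := (hb1 (q p)).1
      set n := max N (max N1 N2)
      have e0 := hN n (le_max_left _ _)
      have e1 := hN1 n (le_trans (le_max_left _ _) (le_max_right _ _))
      have e2 := hN2 n (le_trans (le_max_right _ _) (le_max_right _ _))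
      have c1 : T.dist (τ₁ n) (q w₁) = T.dist (q w₁) (τ₁ n) := dcomm ..
      have c2 : T.dist (τ₁ n) (q p) = T.dist (q p) (τ₁ n) := dcomm ..
      omega
    · have hnot : ¬ ∃ N, ∀ n ≥ N, T.dist (τ₂ n) (q p) = T.dist (τ₂ n) (q w₁) + 1 := by
        rintro ⟨N, hN⟩
        obtain ⟨n, hn, hne⟩ := hF2 p w₁ w₂ h1 h2 h3 h4 N
        refine hne ?_
        rw [dcomm T (q p) (τ₂ n), dcomm T (q w₁) (τ₂ n)]
        exact hN n hn
      obtain ⟨N, hN⟩ := eventual_side hT hτ₂ hadj hnot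
      obtain ⟨N1, hN1⟩ := (hb2 (q w₁)).1
      obtain ⟨N2, hN2⟩ := (hb2 (q p)).1
      set n := max N (max N1 N2)
      have e0 := hN n (le_max_left _ _)
      have e1 := hN1 n (le_trans (le_max_left _ _) (le_max_right _ _))
      have e2 := hN2 n (le_trans (le_max_right _ _) (le_max_right _ _))
      have c1 : T.dist (τ₂ n) (q w₁) = T.dist (q w₁) (τ₂ n) := dcomm ..
      have c2 : T.dist (τ₂ n) (q p) = T.dist (q p) (τ₂ n) := dcomm ..
      omega
  -- a point minimizing bus1 + bus2
  obtain ⟨B, hB⟩ := sigma_bounded hT hτ₁ hτ₂ hb2 hneq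
  obtain ⟨z, hz⟩ := sigma_min_exists hT hb1 hb2 hB
  -- the invariant convex set Y
  set Y : Set V := {y | ∀ p w₁ w₂ : W, S.Adj p w₁ → S.Adj p w₂ → w₁ ≠ w₂ → q w₁ = q w₂ →
      T.dist y (q w₁) = T.dist y (q p) + 1} with hYdef
  have hzY : z ∈ Y := by
    intro p w₁ w₂ h1 h2 h3 h4
    obtain ⟨hs1, hs2⟩ := pair_side p w₁ w₂ h1 h2 h3 h4
    exact side_min hT hb1 hb2 hz (hq p w₁ h1) hs1 hs2
  have hYinv : ∀ (g : G) (y : V), y ∈ Y → g • y ∈ Y := by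
    intro g y hy p w₁ w₂ h1 h2 h3 h4
    have h1' : S.Adj (g⁻¹ • p) (g⁻¹ • w₁) := hactS g⁻¹ _ _ h1
    have h2' : S.Adj (g⁻¹ • p) (g⁻¹ • w₂) := hactS g⁻¹ _ _ h2
    have h3' : g⁻¹ • w₁ ≠ g⁻¹ • w₂ := fun hc => h3 (MulAction.injective g⁻¹ hc)
    have h4' : q (g⁻¹ • w₁) = q (g⁻¹ • w₂) := by
      rw [hequiv, hequiv, h4]
    have := hy (g⁻¹ • p) (g⁻¹ • w₁) (g⁻¹ • w₂) h1' h2' h3' h4'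
    rw [hequiv, hequiv] at this
    have e1 : T.dist (g • y) (q w₁) = T.dist y (g⁻¹ • q w₁) := by
      rw [← dist_smul g⁻¹, inv_smul_smul]
    have e2 : T.dist (g • y) (q p) = T.dist y (g⁻¹ • q p) := by
      rw [← dist_smul g⁻¹, inv_smul_smul]
    rw [e1, e2]
    omega
  -- Y is convex (closed under betweenness)
  have hYbtw : ∀ y₁ x y₂ : V, y₁ ∈ Y → y₂ ∈ Y → Btw T y₁ x y₂ → x ∈ Y := by
    intro y₁ x y₂ hy₁ hy₂ hbtw
    intro pp w₁ w₂ h1 h2 h3 h4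
    set a := q pp with hadef
    set b := q w₁ with hbdef
    have hab : T.Adj a b := hq pp w₁ h1
    by_contra hcon
    have hx : T.dist x a = T.dist x b + 1 := by
      rcases adj_dichotomy hT hab x with h | h
      · exact absurd h hcon
      · exact h
    obtain ⟨p, hp, hl⟩ := exists_geo hT y₁ y₂
    obtain ⟨t, hgt, htl⟩ := mem_support_iff_exists_getVert.mp (btw_mem_support hT hbtw hp)
    set P : ℕ → Prop := fun j => T.dist (p.getVert j) b = T.dist (p.getVert j) a + 1 with hPdef
    have hP0 : P 0 := by
      simp only [hPdef, Walk.getVert_zero]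
      exact hy₁ pp w₁ w₂ h1 h2 h3 h4
    have hPlen : P p.length := by
      simp only [hPdef, Walk.getVert_length]
      exact hy₂ pp w₁ w₂ h1 h2 h3 h4
    have hnPt : ¬ P t := by
      simp only [hPdef, hgt]
      omega
    obtain ⟨j₁, hj₁0, hj₁t, hj₁P, hj₁nP⟩ := flip_exists (Nat.zero_le t) hP0 hnPt
    have hQj₁ : T.dist (p.getVert (j₁+1)) a = T.dist (p.getVert (j₁+1)) b + 1 := by
      rcases adj_dichotomy hT hab (p.getVert (j₁+1)) with h | h
      · exact absurd h hj₁nP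
      · exact h
    have hcr₁ := crossing hT hab (p.adj_getVert_succ (by omega)) hj₁P hQj₁
    set Q : ℕ → Prop := fun j => T.dist (p.getVert j) a = T.dist (p.getVert j) b + 1 with hQdef
    have hQt : Q t := by simp only [hQdef, hgt]; exact hx
    have hnQlen : ¬ Q p.length := by
      simp only [hQdef, Walk.getVert_length]
      simp only [hPdef, Walk.getVert_length] at hPlen
      omega
    obtain ⟨j₂, hj₂t, hj₂l, hj₂Q, hj₂nQ⟩ := flip_exists htl hQt hnQlen
    have hPj₂ : T.dist (p.getVert (j₂+1)) b = T.dist (p.getVert (j₂+1)) a + 1 := by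
      rcases adj_dichotomy hT hab (p.getVert (j₂+1)) with h | h
      · exact h
      · exact absurd h hj₂nQ
    have hcr₂ := crossing hT hab.symm (p.adj_getVert_succ (by omega)) hj₂Q hPj₂
    -- hcr₁ : getVert j₁ = a ∧ getVert (j₁+1) = b ; hcr₂ : getVert j₂ = b ∧ getVert (j₂+1) = a
    have hd1 : T.dist (p.getVert (j₁+1)) (p.getVert j₂) = j₂ - (j₁+1) :=
      getVert_getVert_dist hT hp (by omega) (by omega)
    have hd2 : T.dist (p.getVert j₁) (p.getVert (j₂+1)) = (j₂+1) - j₁ :=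
      getVert_getVert_dist hT hp (by omega) (by omega)
    rw [hcr₁.2, hcr₂.1] at hd1
    rw [hcr₁.1, hcr₂.2] at hd2
    simp only [SimpleGraph.dist_self] at hd1 hd2
    omega
  -- the distance-to-Y function
  set k : V → ℕ := fun v => sInf ((fun y => T.dist v y) '' Y) with hkdef
  have hYne : ((fun y => T.dist z y) '' Y).Nonempty := ⟨T.dist z z, z, hzY, rfl⟩
  have himne : ∀ v : V, ((fun y => T.dist v y) '' Y).Nonempty := fun v => ⟨T.dist v z, z, hzY, rfl⟩
  have kreal : ∀ v : V, ∃ y ∈ Y, T.dist v y = k v := by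
    intro v
    have := Nat.sInf_mem (himne v)
    obtain ⟨y, hy, he⟩ := this
    exact ⟨y, hy, he⟩
  have k_le : ∀ v y, y ∈ Y → k v ≤ T.dist v y := by
    intro v y hy
    exact Nat.sInf_le ⟨y, hy, rfl⟩
  -- F3 : collapsing pairs increase k by one
  have F3 : ∀ p w₁ w₂ : W, S.Adj p w₁ → S.Adj p w₂ → w₁ ≠ w₂ → q w₁ = q w₂ →
      k (q w₁) = k (q p) + 1 := by
    intro p w₁ w₂ h1 h2 h3 h4
    have hle : k (q w₁) ≤ k (q p) + 1 := by
      obtain ⟨y, hy, he⟩ := kreal (q p)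
      have := hy p w₁ w₂ h1 h2 h3 h4
      have c1 : T.dist y (q w₁) = T.dist (q w₁) y := dcomm ..
      have c2 : T.dist y (q p) = T.dist (q p) y := dcomm ..
      have := k_le (q w₁) y hy
      omega
    have hge : k (q p) + 1 ≤ k (q w₁) := by
      obtain ⟨y, hy, he⟩ := kreal (q w₁)
      have := hy p w₁ w₂ h1 h2 h3 h4
      have c1 : T.dist y (q w₁) = T.dist (q w₁) y := dcomm ..
      have c2 : T.dist y (q p) = T.dist (q p) y := dcomm ..
      have := k_le (q p) y hy
      omega
    omega
  -- k is 1-Lipschitz on adjacent vertices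
  have kLip : ∀ u v : V, T.Adj u v → k u ≤ k v + 1 := by
    intro u v huv
    obtain ⟨y, hy, he⟩ := kreal v
    have t : T.dist u y ≤ T.dist u v + T.dist v y := dtri hT _ _ _
    have := k_le u y hy
    have := adj_dist_one huv
    omega
  -- F1 : adjacent vertices with equal k have k = 0
  have F1 : ∀ u v : V, T.Adj u v → k u = k v → k u = 0 := by
    intro u v huv hkeq
    by_contra hne0
    have hK : 1 ≤ k u := by omega
    obtain ⟨y₁, hy₁, he₁⟩ := kreal u
    obtain ⟨y₂, hy₂, he₂⟩ := kreal v
    have hvy₁ : T.dist v y₁ = k u + 1 := by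
      have hle := k_le v y₁ hy₁
      have c1 : T.dist y₁ u = T.dist u y₁ := dcomm ..
      have c2 : T.dist y₁ v = T.dist v y₁ := dcomm ..
      rcases adj_dichotomy hT huv y₁ with h | h
      · omega
      · omega
    have huy₂ : T.dist u y₂ = k u + 1 := by
      have hle := k_le u y₂ hy₂
      have c1 : T.dist y₂ u = T.dist u y₂ := dcomm ..
      have c2 : T.dist y₂ v = T.dist v y₂ := dcomm ..
      rcases adj_dichotomy hT huv y₂ with h | h
      · omega
      · omega
    obtain ⟨p, hp, hl⟩ := exists_geo hT y₁ y₂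
    set P : ℕ → Prop := fun j => T.dist (p.getVert j) v = T.dist (p.getVert j) u + 1 with hPdef
    have hP0 : P 0 := by
      simp only [hPdef, Walk.getVert_zero]
      have c1 : T.dist y₁ u = T.dist u y₁ := dcomm ..
      have c2 : T.dist y₁ v = T.dist v y₁ := dcomm ..
      omega
    have hnPlen : ¬ P p.length := by
      simp only [hPdef, Walk.getVert_length]
      have c1 : T.dist y₂ u = T.dist u y₂ := dcomm ..
      have c2 : T.dist y₂ v = T.dist v y₂ := dcomm ..
      omega
    obtain ⟨j, hj0, hjl, hjP, hjnP⟩ := flip_exists (Nat.zero_le p.length) hP0 hnPlen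
    have hQj : T.dist (p.getVert (j+1)) u = T.dist (p.getVert (j+1)) v + 1 := by
      rcases adj_dichotomy hT huv (p.getVert (j+1)) with h | h
      · exact absurd h hjnP
      · exact h
    have hcr := crossing hT huv (p.adj_getVert_succ (by omega)) hjP hQj
    -- getVert j = u, so u ∈ Y
    have hmemY : p.getVert j ∈ Y := by
      apply hYbtw y₁ _ y₂ hy₁ hy₂
      apply support_btw hT hp
      rw [mem_support_iff_exists_getVert]
      exact ⟨j, rfl, by omega⟩
    rw [hcr.1] at hmemY
    have := k_le u u hmemY
    simp [SimpleGraph.dist_self] at this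
    omega
  -- F2 : unique descending neighbour
  have F2 : ∀ x u₁ u₂ : V, T.Adj x u₁ → T.Adj x u₂ → 1 ≤ k x →
      k u₁ + 1 = k x → k u₂ + 1 = k x → u₁ = u₂ := by
    intro x u₁ u₂ h1 h2 hK hk1 hk2
    obtain ⟨y₁, hy₁, he₁⟩ := kreal u₁
    obtain ⟨y₂, hy₂, he₂⟩ := kreal u₂
    have hxy₁ : T.dist x y₁ = k x := by
      have t : T.dist x y₁ ≤ T.dist x u₁ + T.dist u₁ y₁ := dtri hT _ _ _
      have := k_le x y₁ hy₁
      have := adj_dist_one h1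
      omega
    have hxy₂ : T.dist x y₂ = k x := by
      have t : T.dist x y₂ ≤ T.dist x u₂ + T.dist u₂ y₂ := dtri hT _ _ _
      have := k_le x y₂ hy₂
      have := adj_dist_one h2
      omega
    obtain ⟨m, hm1, hm2, hm3⟩ := median hT x y₁ y₂
    have hmY : m ∈ Y := hYbtw y₁ m y₂ hy₁ hy₂ hm1
    have hmin := k_le x m hmY
    unfold Btw at hm2 hm3
    have hmy₁ : m = y₁ := by
      have : T.dist m y₁ = 0 := by omega
      exact dzero hT this
    have hmy₂ : m = y₂ := by
      have : T.dist m y₂ = 0 := by omega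
      exact dzero hT this
    have hyy : y₁ = y₂ := hmy₁ ▸ hmy₂
    have hb1' : Btw T x u₁ y₁ := by
      unfold Btw
      rw [adj_dist_one h1, he₁, hxy₁]
      omega
    have hb2' : Btw T x u₂ y₁ := by
      unfold Btw
      rw [adj_dist_one h2, hyy, he₂, hyy] at *
      omega
    exact btw_unique hT hb1' hb2' (by rw [adj_dist_one h1, adj_dist_one h2])
  -- the minimum of k ∘ q and the invariant set A
  set c : ℕ := sInf (Set.range (fun x : W => k (q x))) with hcdef
  have hrne : (Set.range (fun x : W => k (q x))).Nonempty := ⟨k (q p₀), p₀, rfl⟩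
  obtain ⟨x₀, hx₀⟩ := Nat.sInf_mem hrne
  have hx₀' : k (q x₀) = c := hx₀
  have hcle : ∀ x : W, c ≤ k (q x) := fun x => Nat.sInf_le ⟨x, rfl⟩
  set A : Set W := {x : W | k (q x) ≤ c} with hAdef
  have hAne : A.Nonempty := ⟨x₀, by simp only [hAdef, Set.mem_setOf_eq]; omega⟩
  -- invariance of k under the action
  have k_smul : ∀ (g : G) (v : V), k (g • v) = k v := by
    intro g v
    have hseteq : ((fun y => T.dist (g • v) y) '' Y) = ((fun y => T.dist v y) '' Y) := by
      ext n
      constructor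
      · rintro ⟨y, hy, rfl⟩
        refine ⟨g⁻¹ • y, hYinv g⁻¹ y hy, ?_⟩
        show T.dist v (g⁻¹ • y) = T.dist (g • v) y
        rw [← dist_smul g v (g⁻¹ • y), smul_inv_smul]
      · rintro ⟨y, hy, rfl⟩
        refine ⟨g • y, hYinv g y hy, ?_⟩
        show T.dist (g • v) (g • y) = T.dist v y
        exact dist_smul g v y
    simp only [hkdef]
    rw [hseteq]
  have hAinv : ∀ (g : G) (x : W), x ∈ A → g • x ∈ A := by
    intro g x hx
    simp only [hAdef, Set.mem_setOf_eq] at hx ⊢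
    rw [hequiv, k_smul]
    exact hx
  -- A is closed under betweenness
  have hAbtw : ∀ a b c' : W, a ∈ A → c' ∈ A → S.dist a b + S.dist b c' = S.dist a c' → b ∈ A := by
    intro a b c' ha hc' hbtw
    simp only [hAdef, Set.mem_setOf_eq] at ha hc' ⊢
    obtain ⟨p, hp, hl⟩ := exists_geo hS a c'
    obtain ⟨t, hgt, htl⟩ := mem_support_iff_exists_getVert.mp
      (btw_mem_support hS (show Btw S a b c' from hbtw) hp)
    -- the maximum of k ∘ q along the path
    obtain ⟨jm, hjmmem, hjmmax⟩ := Finset.exists_max_image (Finset.range (p.length + 1))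
      (fun j => k (q (p.getVert j))) ⟨0, by simp⟩
    have hjml : jm ≤ p.length := by
      have := Finset.mem_range.mp hjmmem
      omega
    have hmax : ∀ j, j ≤ p.length → k (q (p.getVert j)) ≤ k (q (p.getVert jm)) := by
      intro j hj
      exact hjmmax j (Finset.mem_range.mpr (by omega))
    by_cases hbig : k (q (p.getVert jm)) ≤ c
    · have := hmax t htl
      rw [hgt] at this
      omega
    · exfalso
      push_neg at hbig
      have hK1 : 1 ≤ k (q (p.getVert jm)) := by omega
      have hjm0 : jm ≠ 0 := by
        intro h
        rw [h] at hbig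
        simp only [Walk.getVert_zero] at hbig
        omega
      have hjmlen : jm ≠ p.length := by
        intro h
        rw [h] at hbig
        simp only [Walk.getVert_length] at hbig
        omega
      obtain ⟨j', rfl⟩ : ∃ j', jm = j' + 1 := ⟨jm - 1, by omega⟩
      have hadj₁ : S.Adj (p.getVert (j' + 1)) (p.getVert j') :=
        (p.adj_getVert_succ (by omega)).symm
      have hadj₂ : S.Adj (p.getVert (j' + 1)) (p.getVert (j' + 2)) :=
        p.adj_getVert_succ (by omega)
      have hT₁ : T.Adj (q (p.getVert (j' + 1))) (q (p.getVert j')) := hq _ _ hadj₁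
      have hT₂ : T.Adj (q (p.getVert (j' + 1))) (q (p.getVert (j' + 2))) := hq _ _ hadj₂
      -- both neighbours have k exactly one less
      have hk₁ : k (q (p.getVert j')) + 1 = k (q (p.getVert (j' + 1))) := by
        have hle := hmax j' (by omega)
        have hlip := kLip (q (p.getVert (j' + 1))) (q (p.getVert j')) hT₁
        have hne := F1 (q (p.getVert (j' + 1))) (q (p.getVert j')) hT₁
        rcases Nat.lt_or_ge (k (q (p.getVert j'))) (k (q (p.getVert (j' + 1)))) with h | h
        · omega
        · have heq : k (q (p.getVert (j' + 1))) = k (q (p.getVert j')) := by omega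
          have := F1 _ _ hT₁ heq
          omega
      have hk₂ : k (q (p.getVert (j' + 2))) + 1 = k (q (p.getVert (j' + 1))) := by
        have hle := hmax (j' + 2) (by omega)
        have hlip := kLip (q (p.getVert (j' + 1))) (q (p.getVert (j' + 2))) hT₂
        rcases Nat.lt_or_ge (k (q (p.getVert (j' + 2)))) (k (q (p.getVert (j' + 1)))) with h | h
        · omega
        · have heq : k (q (p.getVert (j' + 1))) = k (q (p.getVert (j' + 2))) := by omega
          have := F1 _ _ hT₂ heq
          omega
      have hueq : q (p.getVert j') = q (p.getVert (j' + 2)) :=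
        F2 (q (p.getVert (j' + 1))) (q (p.getVert j')) (q (p.getVert (j' + 2)))
          hT₁ hT₂ hK1 hk₁ hk₂
      have hne : p.getVert (j' + 2) ≠ p.getVert j' := by
        intro h
        have := getVert_getVert_dist hS hp (show j' ≤ j' + 2 by omega) (by omega)
        rw [h] at this
        simp [SimpleGraph.dist_self] at this
      have := F3 (p.getVert (j' + 1)) (p.getVert (j' + 2)) (p.getVert j')
        hadj₂ hadj₁ hne (hueq.symm)
      omega
  -- minimality forces k ∘ q to be constant
  have hAuniv := hmin A hAne hAbtw hAinv
  have hconst : ∀ x : W, k (q x) = c := by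
    intro x
    have hx : x ∈ A := hAuniv ▸ Set.mem_univ x
    simp only [hAdef, Set.mem_setOf_eq] at hx
    have := hcle x
    omega
  -- contradiction with the collapsing pair
  have := F3 p₀ a₀ b₀ hp₀a hp₀b hab₀ hqab
  rw [hconst a₀, hconst p₀] at this
  omega

end Main

end S9

/-- Let `T` be a cocompact `G`-tree, `T̃` a minimal `G`-tree, and
`q : T̃ → T` a `G`-equivariant tree morphism which is not locally injective.
Then at most one end of `T` is faced by no collapsing pair: two inequivalent
geodesic rays cannot both fail to be faced by a collapsing pair. -/
theorem stmt9 {W V : Type*} (S : SimpleGraph W) (T : SimpleGraph V)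
    (hS : S.IsTree) (hT : T.IsTree)
    (G : Type*) [Group G] [MulAction G W] [MulAction G V]
    (hactS : ∀ (g : G) (x y : W), S.Adj x y → S.Adj (g • x) (g • y))
    (hactT : ∀ (g : G) (x y : V), T.Adj x y → T.Adj (g • x) (g • y))
    (hcocompact : ∃ s : Finset V, ∀ v : V, ∃ g : G, g • v ∈ s)
    (hmin : IsMinimalGTree S G)
    (q : W → V) (hq : ∀ a b : W, S.Adj a b → T.Adj (q a) (q b))
    (hequiv : ∀ (g : G) (w : W), q (g • w) = g • q w)
    (hnotlocinj : ¬ ∀ (w a b : W), S.Adj w a → S.Adj w b → q a = q b → a = b) :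
    ∀ τ₁ τ₂ : ℕ → V, IsGeodRay T τ₁ → IsGeodRay T τ₂ → ¬ RayEquiv τ₁ τ₂ →
      CollapsingPairFacesRay S T q τ₁ ∨ CollapsingPairFacesRay S T q τ₂ := by
  intro τ₁ τ₂ hτ₁ hτ₂ hneq
  by_contra hcon
  push_neg at hcon
  obtain ⟨hc1, hc2⟩ := hcon
  exact S9.main_aux S T hS hT G hactS hactT hmin q hq hequiv hnotlocinj τ₁ τ₂ hτ₁ hτ₂ hneq hc1 hc2
end

section
/- Let q : T̃ → T be a G-equivariant tree morphism between trees, and suppose a vertex v of T lies in the image of q and some vertex ṽ of T̃ mapping near v admits an oriented edge ẽ belonging to a collapsing pair and oriented toward ṽ, with q(ẽ) not oriented toward v = q(ṽ). Then the image under q of the geodesic path in T̃ from ẽ to ṽ contains a point of backtracking, and the backtracking point closest to v yields a collapsing pair facing v. -/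
open SimpleGraph

/-- In a tree, adjacent vertices have different distances to any vertex. -/
private lemma tree_adj_dist_ne {V : Type*} {T : SimpleGraph V} (hT : T.IsTree)
    {x y v : V} (hxy : T.Adj x y) : T.dist x v ≠ T.dist y v := by
  classical
  intro h
  obtain ⟨px, hlen⟩ := hT.isConnected.exists_walk_length_eq_dist x v
  have hpath : px.IsPath := px.isPath_of_length_eq_dist hlen
  by_cases hy : y ∈ px.support
  · have hd : T.dist y v ≤ (px.dropUntil y hy).length := dist_le _
    have hspec := congrArg Walk.length (px.take_spec hy)
    rw [Walk.length_append] at hspec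
    have htake : (px.takeUntil y hy).length = 0 := by omega
    have : x = y := Walk.eq_of_length_eq_zero htake
    exact hxy.ne this
  · obtain ⟨py, hlen2⟩ := hT.isConnected.exists_walk_length_eq_dist y v
    have hpy : py.IsPath := py.isPath_of_length_eq_dist hlen2
    have hQ : (Walk.cons hxy.symm px).IsPath := hpath.cons hy
    have := (hT.existsUnique_path y v).unique hQ hpy
    have := congrArg Walk.length this
    simp only [Walk.length_cons] at this
    omega

/-- In a tree, the neighbour strictly closer to `v` is unique. -/
private lemma tree_closer_unique {V : Type*} {T : SimpleGraph V} (hT : T.IsTree)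
    {p w₁ w₂ v : V} (h1 : T.Adj p w₁) (h2 : T.Adj p w₂)
    (d1 : T.dist w₁ v + 1 = T.dist p v) (d2 : T.dist w₂ v + 1 = T.dist p v) :
    w₁ = w₂ := by
  obtain ⟨P₁, l1⟩ := hT.isConnected.exists_walk_length_eq_dist w₁ v
  obtain ⟨P₂, l2⟩ := hT.isConnected.exists_walk_length_eq_dist w₂ v
  have lq1 : (Walk.cons h1 P₁).length = T.dist p v := by
    simp only [Walk.length_cons]; omega
  have lq2 : (Walk.cons h2 P₂).length = T.dist p v := by
    simp only [Walk.length_cons]; omega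
  have hp1 := (Walk.cons h1 P₁).isPath_of_length_eq_dist lq1
  have hp2 := (Walk.cons h2 P₂).isPath_of_length_eq_dist lq2
  have heq := (hT.existsUnique_path p v).unique hp1 hp2
  have := congrArg (fun Q : T.Walk p v => Q.getVert 1) heq
  simpa [Walk.getVert_cons_succ, Walk.getVert_zero] using this

/-- Let `q : T̃ → T` be a `G`-equivariant tree morphism, `v = q vt`
a vertex of `T` in the image, and `ẽ = (at', bt)` an oriented edge of `T̃`
belonging to a collapsing pair and oriented toward `vt`, with `q(ẽ)` not
oriented toward `v`.  Then the image under `q` of the geodesic from `ẽ` to `vt`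
contains a point of backtracking, i.e. there is a collapsing pair whose
vertices lie on that geodesic and which faces `v`. -/
theorem stmt10 {W V : Type*} (S : SimpleGraph W) (T : SimpleGraph V)
    (hS : S.IsTree) (hT : T.IsTree)
    (G : Type*) [Group G] [MulAction G W] [MulAction G V]
    (hactS : ∀ (g : G) (x y : W), S.Adj x y → S.Adj (g • x) (g • y))
    (hactT : ∀ (g : G) (x y : V), T.Adj x y → T.Adj (g • x) (g • y))
    (q : W → V) (hq : ∀ a b : W, S.Adj a b → T.Adj (q a) (q b))
    (hequiv : ∀ (g : G) (w : W), q (g • w) = g • q w)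
    (vt at' bt : W) (v : V) (hv : v = q vt)
    (hedge : S.Adj at' bt)
    -- `ẽ = (at', bt)` belongs to a collapsing pair:
    (hpair : ∃ ct : W, S.Adj at' ct ∧ ct ≠ bt ∧ q ct = q bt)
    -- `ẽ` is oriented toward `vt` in `T̃`:
    (htoward : S.dist bt vt + 1 = S.dist at' vt)
    -- `q(ẽ)` is not oriented toward `v` in `T`:
    (hnottoward : ¬ (T.dist (q bt) v + 1 = T.dist (q at') v)) :
    ∃ p w₁ w₂ : W,
      -- `p`, `w₁`, `w₂` lie on the geodesic from `at'` to `vt` in `T̃`: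
      S.dist at' p + S.dist p vt = S.dist at' vt ∧
      S.dist at' w₁ + S.dist w₁ vt = S.dist at' vt ∧
      S.dist at' w₂ + S.dist w₂ vt = S.dist at' vt ∧
      -- `(p, w₁)`, `(p, w₂)` form a collapsing pair (a point of backtracking
      -- of the image path):
      S.Adj p w₁ ∧ S.Adj p w₂ ∧ w₁ ≠ w₂ ∧ q w₁ = q w₂ ∧
      -- the collapsing pair faces `v`:
      T.dist (q p) v = T.dist (q w₁) v + 1 := by
  classical
  have hconnS := hS.isConnected
  have hconnT := hT.isConnected
  -- distance to `v` changes by exactly one along any edge of the tree `T`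
  have step : ∀ x y : V, T.Adj x y →
      (T.dist y v + 1 = T.dist x v ∨ T.dist x v + 1 = T.dist y v) := by
    intro x y hxy
    have hne := tree_adj_dist_ne hT hxy (v := v)
    have h1 := hconnT.dist_triangle (u := x) (v := y) (w := v)
    have h2 := hconnT.dist_triangle (u := y) (v := x) (w := v)
    have hd1 : T.dist x y ≤ 1 := by
      simpa using dist_le (Walk.cons hxy Walk.nil)
    have hd2 : T.dist y x ≤ 1 := by
      simpa using dist_le (Walk.cons hxy.symm Walk.nil)
    omega
  set d := S.dist at' vt with hd
  have hd1 : 1 ≤ d := by omega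
  obtain ⟨Q, hQ⟩ := hconnS.exists_walk_length_eq_dist bt vt
  set P : S.Walk at' vt := Walk.cons hedge Q with hP
  have hPlen : P.length = d := by
    simp only [hP, Walk.length_cons]; omega
  set x : ℕ → W := fun j => P.getVert j with hxdef
  have hx0 : x 0 = at' := P.getVert_zero
  have hx1 : x 1 = bt := by
    simp [hxdef, hP, Walk.getVert_cons_succ, Walk.getVert_zero]
  have hxd : x d = vt := by
    show P.getVert d = vt
    rw [← hPlen]; exact P.getVert_length
  have hadjx : ∀ j, j < d → S.Adj (x j) (x (j + 1)) := by
    intro j hj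
    exact P.adj_getVert_succ (by omega)
  have hadj1 : ∀ j, j < d → S.dist (x j) (x (j + 1)) ≤ 1 := by
    intro j hj
    simpa using dist_le (Walk.cons (hadjx j hj) Walk.nil)
  have claim1 : ∀ j, j ≤ d → S.dist at' (x j) ≤ j := by
    intro j
    induction j with
    | zero => intro _; simp [hx0]
    | succ n ih =>
      intro h
      have h1 := ih (by omega)
      have h2 := hadj1 n (by omega)
      have h3 := hconnS.dist_triangle (u := at') (v := x n) (w := x (n + 1))
      omega
  have claim2 : ∀ j, j ≤ d → S.dist (x (d - j)) vt ≤ j := by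
    intro j
    induction j with
    | zero => intro _; simp [Nat.sub_zero, hxd]
    | succ n ih =>
      intro h
      have h1 := ih (by omega)
      have heq : d - (n + 1) + 1 = d - n := by omega
      have h2 := hadj1 (d - (n + 1)) (by omega)
      rw [heq] at h2
      have h3 := hconnS.dist_triangle (u := x (d - (n + 1))) (v := x (d - n)) (w := vt)
      omega
  have hdist : ∀ j, j ≤ d → S.dist at' (x j) = j ∧ S.dist (x j) vt = d - j := by
    intro j hj
    have h1 := claim1 j hj
    have h2 := claim2 (d - j) (by omega)
    rw [show d - (d - j) = j by omega] at h2
    have h3 := hconnS.dist_triangle (u := at') (v := x j) (w := vt)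
    rw [← hd] at h3
    omega
  set f : ℕ → ℕ := fun j => T.dist (q (x j)) v with hfdef
  have hf : ∀ j, j < d → (f (j + 1) + 1 = f j ∨ f j + 1 = f (j + 1)) := by
    intro j hj
    exact step _ _ (hq _ _ (hadjx j hj))
  have hfd : f d = 0 := by
    show T.dist (q (x d)) v = 0
    rw [hxd, ← hv, dist_self]
  have e0 : f 0 = T.dist (q at') v := by rw [hfdef]; simp [hx0]
  have e1 : f 1 = T.dist (q bt) v := by rw [hfdef]; simp [hx1]
  have hf01 : f 0 + 1 = f 1 := by
    rcases hf 0 (by omega) with h | h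
    · rw [e1, e0] at h; exact absurd h hnottoward
    · exact h
  have hex : ∃ j, j < d ∧ f (j + 1) + 1 = f j := by
    by_contra hno
    push_neg at hno
    have mono : ∀ j, j ≤ d → f 0 + j ≤ f j := by
      intro j
      induction j with
      | zero => intro _; omega
      | succ n ih =>
        intro h
        have h1 := ih (by omega)
        rcases hf n (by omega) with hcase | hcase
        · exact absurd hcase (hno n (by omega))
        · omega
    have := mono d le_rfl
    omega
  set i := Nat.find hex with hidef
  obtain ⟨hid, hdesc⟩ := Nat.find_spec hex
  rw [← hidef] at hid hdesc
  have hi1 : 1 ≤ i := by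
    rcases Nat.eq_zero_or_pos i with h0 | h0
    · rw [h0] at hdesc; rw [Nat.zero_add] at hdesc; omega
    · omega
  have hasc : f (i - 1) + 1 = f i := by
    have hni := Nat.find_min hex (m := i - 1) (by omega)
    push_neg at hni
    rcases hf (i - 1) (by omega) with h | h
    · exact absurd h (hni (by omega))
    · rwa [show i - 1 + 1 = i by omega] at h
  have hadjprev : S.Adj (x (i - 1)) (x i) := by
    have := hadjx (i - 1) (by omega)
    rwa [show i - 1 + 1 = i by omega] at this
  refine ⟨x i, x (i - 1), x (i + 1), ?_, ?_, ?_, ?_, ?_, ?_, ?_, ?_⟩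
  · have := hdist i (by omega); omega
  · have := hdist (i - 1) (by omega); omega
  · have := hdist (i + 1) (by omega); omega
  · exact hadjprev.symm
  · exact hadjx i hid
  · intro h
    have e1 := (hdist (i - 1) (by omega)).1
    have e2 := (hdist (i + 1) (by omega)).1
    rw [h] at e1
    omega
  · exact tree_closer_unique hT (p := q (x i)) (v := v)
      (hq _ _ hadjprev.symm) (hq _ _ (hadjx i hid)) hasc hdesc
  · exact hasc.symm
end

section
/- Let q : T̃ → T be a locally surjective G-equivariant morphism of trees and let E be an end of T. Then the set q^{-1}(E) of ends of T̃ represented by lifts of geodesic rays representing E is a singleton if and only if there is no collapsing pair facing E. -/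
/-- `σ` is a lift under `q` of a geodesic ray of `T` representing the same end
as `τ`: `σ` is a geodesic ray of `T̃` and `q ∘ σ` is a geodesic ray of `T`
equivalent to `τ`. -/
def IsLiftOfEnd {W V : Type*} (S : SimpleGraph W) (T : SimpleGraph V)
    (q : W → V) (τ : ℕ → V) (σ : ℕ → W) : Prop :=
  IsGeodRay S σ ∧ IsGeodRay T (fun n => q (σ n)) ∧ RayEquiv (fun n => q (σ n)) τ

namespace Stmt11Aux
open SimpleGraph Walk

variable {V : Type*} {T : SimpleGraph V}

/-- Walk along an adjacent sequence. -/
def walkTo (f : ℕ → V) (hf : ∀ n, T.Adj (f n) (f (n+1))) (a : ℕ) :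
    (k : ℕ) → T.Walk (f a) (f (a+k))
  | 0 => Walk.nil
  | k+1 => (walkTo f hf a k).concat (hf (a+k))

lemma length_walkTo (f : ℕ → V) (hf : ∀ n, T.Adj (f n) (f (n+1))) (a k : ℕ) :
    (walkTo f hf a k).length = k := by
  induction k with
  | zero => rfl
  | succ k ih => simp [walkTo, Walk.length_concat, ih]

lemma support_walkTo (f : ℕ → V) (hf : ∀ n, T.Adj (f n) (f (n+1))) (a k : ℕ) :
    (walkTo f hf a k).support = (List.range (k+1)).map (fun i => f (a+i)) := by
  induction k with
  | zero => simp [walkTo, List.range_succ]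
  | succ k ih =>
    simp [walkTo, Walk.support_concat, ih, List.range_succ]

lemma isPath_walkTo (f : ℕ → V) (hf : ∀ n, T.Adj (f n) (f (n+1)))
    (hinj : Function.Injective f) (a k : ℕ) : (walkTo f hf a k).IsPath := by
  apply Walk.IsPath.mk'
  rw [support_walkTo]
  have : Function.Injective (fun i => f (a + i)) := fun i j h => by
    have := hinj h; omega
  exact List.Nodup.map this (List.nodup_range (n := _))


lemma path_length_eq_dist (hT : T.IsTree) {u v : V} (p : T.Walk u v) (hp : p.IsPath) :
    p.length = T.dist u v := by
  classical
  obtain ⟨w, hw⟩ := hT.isConnected.exists_walk_length_eq_dist u v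
  have h1 : p = w.bypass := (hT.existsUnique_path u v).unique hp w.bypass_isPath
  have h1' := congrArg Walk.length h1
  have h2 := w.length_bypass_le
  have h3 := SimpleGraph.dist_le p
  omega

lemma dist_ray (hT : T.IsTree) {τ : ℕ → V} (hadj : ∀ n, T.Adj (τ n) (τ (n+1)))
    (hinj : Function.Injective τ) {a b : ℕ} (hab : a ≤ b) :
    T.dist (τ a) (τ b) = b - a := by
  obtain ⟨k, rfl⟩ := Nat.exists_eq_add_of_le hab
  have := path_length_eq_dist hT (walkTo τ hadj a k) (isPath_walkTo τ hadj hinj a k)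
  rw [length_walkTo] at this
  omega

lemma getVert_dist (hT : T.IsTree) :
    ∀ {u v : V} (p : T.Walk u v), p.IsPath → ∀ i ≤ p.length,
      T.dist u (p.getVert i) = i ∧ T.dist (p.getVert i) v = p.length - i := by
  intro u v p
  induction p with
  | nil =>
    intro _ i hi
    have : i = 0 := by simpa using hi
    subst this
    simp [SimpleGraph.dist_self]
  | @cons u a w h p ih =>
    intro hp i hi
    have hlen : T.dist u w = p.length + 1 := by
      have := path_length_eq_dist hT _ hp
      simpa using this.symm
    cases i with
    | zero =>
      refine ⟨by simp [SimpleGraph.dist_self], ?_⟩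
      simpa using hlen
    | succ i =>
      have hi' : i ≤ p.length := by simpa using hi
      obtain ⟨ih1, ih2⟩ := ih hp.of_cons i hi'
      set z := p.getVert i with hz
      have hz1 : (Walk.cons h p).getVert (i+1) = z := rfl
      have htri1 : T.dist u z ≤ T.dist u a + T.dist a z := hT.isConnected.dist_triangle
      have htri2 : T.dist u w ≤ T.dist u z + T.dist z w := hT.isConnected.dist_triangle
      have hua : T.dist u a = 1 := SimpleGraph.dist_eq_one_iff_adj.mpr h
      rw [hz1]
      simp only [Walk.length_cons]
      constructor
      · omega
      · omega

lemma adj_dist_cases (hT : T.IsTree) {u v : V} (h : T.Adj u v) (w : V) :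
    T.dist u w = T.dist v w + 1 ∨ T.dist v w = T.dist u w + 1 := by
  classical
  obtain ⟨P0⟩ := hT.isConnected v w
  set P := P0.bypass with hP
  have hPpath : P.IsPath := P0.bypass_isPath
  have hPlen : P.length = T.dist v w := path_length_eq_dist hT P hPpath
  by_cases hu : u ∈ P.support
  · right
    have hsplit := P.take_spec hu
    have hlen : (P.takeUntil u hu).length + (P.dropUntil u hu).length = P.length := by
      rw [← Walk.length_append, hsplit]
    have h1 : (P.takeUntil u hu).length = T.dist v u :=
      path_length_eq_dist hT _ (hPpath.takeUntil hu)
    have h2 : (P.dropUntil u hu).length = T.dist u w :=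
      path_length_eq_dist hT _ (hPpath.dropUntil hu)
    have h3 : T.dist v u = 1 := SimpleGraph.dist_eq_one_iff_adj.mpr h.symm
    omega
  · left
    have hQ : (Walk.cons h P).IsPath := (Walk.cons_isPath_iff h P).mpr ⟨hPpath, hu⟩
    have := path_length_eq_dist hT _ hQ
    simp only [Walk.length_cons] at this
    omega

lemma unique_closer (hT : T.IsTree) {u v₁ v₂ w : V} (h₁ : T.Adj u v₁) (h₂ : T.Adj u v₂)
    (hd₁ : T.dist u w = T.dist v₁ w + 1) (hd₂ : T.dist u w = T.dist v₂ w + 1) : v₁ = v₂ := by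
  classical
  have key : ∀ {v : V} (h : T.Adj u v), T.dist u w = T.dist v w + 1 →
      ∃ (P : T.Walk v w), P.IsPath ∧ u ∉ P.support := by
    intro v h hd
    obtain ⟨P0⟩ := hT.isConnected v w
    refine ⟨P0.bypass, P0.bypass_isPath, ?_⟩
    intro hu
    set P := P0.bypass with hPdef
    have hPpath : P.IsPath := P0.bypass_isPath
    have hPlen : P.length = T.dist v w := path_length_eq_dist hT P hPpath
    have hsplit := P.take_spec hu
    have hlen : (P.takeUntil u hu).length + (P.dropUntil u hu).length = P.length := by
      rw [← Walk.length_append, hsplit]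
    have h2 : (P.dropUntil u hu).length = T.dist u w :=
      path_length_eq_dist hT _ (hPpath.dropUntil hu)
    omega
  obtain ⟨P₁, hP₁, hu₁⟩ := key h₁ hd₁
  obtain ⟨P₂, hP₂, hu₂⟩ := key h₂ hd₂
  have hQ₁ : (Walk.cons h₁ P₁).IsPath := (Walk.cons_isPath_iff _ _).mpr ⟨hP₁, hu₁⟩
  have hQ₂ : (Walk.cons h₂ P₂).IsPath := (Walk.cons_isPath_iff _ _).mpr ⟨hP₂, hu₂⟩
  have heq : Walk.cons h₁ P₁ = Walk.cons h₂ P₂ := (hT.existsUnique_path u w).unique hQ₁ hQ₂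
  have := congrArg Walk.support heq
  rw [Walk.support_cons, Walk.support_cons, P₁.support_eq_cons, P₂.support_eq_cons] at this
  simp only [List.cons.injEq] at this
  exact this.2.1

lemma dist_le_of_mem_support {u v w : V} (p : T.Walk u v) (h : w ∈ p.support) :
    T.dist u w ≤ p.length := by
  classical
  exact le_trans (SimpleGraph.dist_le (p.takeUntil w h)) (p.length_takeUntil_le h)

lemma eventually_linear (hT : T.IsTree) {τ : ℕ → V} (hadj : ∀ n, T.Adj (τ n) (τ (n+1)))
    (hinj : Function.Injective τ) (u : V) :
    ∃ j : ℕ, ∀ n, j ≤ n → T.dist u (τ n) = T.dist u (τ j) + (n - j) := by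
  set g : ℕ → ℤ := fun n => (T.dist u (τ n) : ℤ) - n with hg
  have hstep : ∀ n, g (n+1) ≤ g n := by
    intro n
    have h1 : T.dist u (τ (n+1)) ≤ T.dist u (τ n) + T.dist (τ n) (τ (n+1)) :=
      hT.isConnected.dist_triangle
    have h2 : T.dist (τ n) (τ (n+1)) = 1 := SimpleGraph.dist_eq_one_iff_adj.mpr (hadj n)
    simp only [hg]
    omega
  have hanti : ∀ a b, a ≤ b → g b ≤ g a := by
    intro a b hab
    obtain ⟨k, rfl⟩ := Nat.exists_eq_add_of_le hab
    clear hab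
    induction k with
    | zero => exact le_refl _
    | succ k ih => exact le_trans (hstep (a+k)) ih
  have hbound : ∀ n, -(T.dist u (τ 0) : ℤ) ≤ g n := by
    intro n
    have h1 : T.dist (τ 0) (τ n) = n := by
      have := dist_ray hT hadj hinj (Nat.zero_le n)
      omega
    have h2 : T.dist (τ 0) (τ n) ≤ T.dist (τ 0) u + T.dist u (τ n) :=
      hT.isConnected.dist_triangle
    have h3 : T.dist (τ 0) u = T.dist u (τ 0) := SimpleGraph.dist_comm
    simp only [hg]
    omega
  set d0 : ℤ := (T.dist u (τ 0) : ℤ) with hd0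
  have hnonneg : ∀ n, 0 ≤ g n + d0 := fun n => by have := hbound n; omega
  set A : Set ℕ := Set.range (fun n => (g n + d0).toNat) with hA
  have hAne : A.Nonempty := ⟨_, ⟨0, rfl⟩⟩
  obtain ⟨j, hj⟩ := Nat.sInf_mem hAne
  refine ⟨j, fun n hn => ?_⟩
  have h1 : sInf A ≤ (g n + d0).toNat := Nat.sInf_le ⟨n, rfl⟩
  have h2 : g n ≤ g j := hanti j n hn
  have h3 : (g n + d0).toNat ≤ (g j + d0).toNat := by
    have := hnonneg n; have := hnonneg j; omega
  have hj' : (g j + d0).toNat = sInf A := hj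
  have h4 : (g n + d0).toNat = (g j + d0).toNat := le_antisymm h3 (hj' ▸ h1)
  have h5 : g n = g j := by
    have e1 := Int.toNat_of_nonneg (hnonneg n)
    have e2 := Int.toNat_of_nonneg (hnonneg j)
    omega
  simp only [hg] at h5
  omega


section Lift
variable {W : Type*} {S : SimpleGraph W} {q : W → V}

/-- Lift of an adjacent ray through a locally surjective morphism, starting at a
prescribed vertex over the basepoint. -/
noncomputable def liftRay
    (hlocsurj : ∀ (w : W) (v' : V), T.Adj (q w) v' → ∃ w' : W, S.Adj w w' ∧ q w' = v')
    {ρ : ℕ → V} (hρ : ∀ n, T.Adj (ρ n) (ρ (n+1))) {w : W} (hw : q w = ρ 0) :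
    (n : ℕ) → {x : W // q x = ρ n}
  | 0 => ⟨w, hw⟩
  | n+1 =>
    have prev := liftRay hlocsurj hρ hw n
    have hadj : T.Adj (q prev.1) (ρ (n+1)) := by rw [prev.2]; exact hρ n
    ⟨(hlocsurj prev.1 (ρ (n+1)) hadj).choose,
     (hlocsurj prev.1 (ρ (n+1)) hadj).choose_spec.2⟩

lemma liftRay_zero
    (hlocsurj : ∀ (w : W) (v' : V), T.Adj (q w) v' → ∃ w' : W, S.Adj w w' ∧ q w' = v')
    {ρ : ℕ → V} (hρ : ∀ n, T.Adj (ρ n) (ρ (n+1))) {w : W} (hw : q w = ρ 0) :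
    (liftRay hlocsurj hρ hw 0).1 = w := rfl

lemma liftRay_adj
    (hlocsurj : ∀ (w : W) (v' : V), T.Adj (q w) v' → ∃ w' : W, S.Adj w w' ∧ q w' = v')
    {ρ : ℕ → V} (hρ : ∀ n, T.Adj (ρ n) (ρ (n+1))) {w : W} (hw : q w = ρ 0) (n : ℕ) :
    S.Adj (liftRay hlocsurj hρ hw n).1 (liftRay hlocsurj hρ hw (n+1)).1 := by
  have prev := liftRay hlocsurj hρ hw n
  have hadj : T.Adj (q (liftRay hlocsurj hρ hw n).1) (ρ (n+1)) := by
    rw [(liftRay hlocsurj hρ hw n).2]; exact hρ n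
  exact (hlocsurj (liftRay hlocsurj hρ hw n).1 (ρ (n+1)) hadj).choose_spec.1

end Lift


section Crunch
variable {W : Type*} {S : SimpleGraph W} {q : W → V}

lemma crunch (hS : S.IsTree) (hT : T.IsTree)
    (hq : ∀ a b : W, S.Adj a b → T.Adj (q a) (q b))
    {τ : ℕ → V} (hτ : IsGeodRay T τ)
    (hnc : ¬ CollapsingPairFacesRay S T q τ)
    {c : ℕ} {x y x' y' : W} (hxy : x ≠ y)
    (hqx : q x = τ c) (hqy : q y = τ c)
    (hxx' : S.Adj x x') (hyy' : S.Adj y y')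
    (hqx' : q x' = τ (c+1)) (hqy' : q y' = τ (c+1)) :
    S.dist x' y' + 2 ≤ S.dist x y := by
  classical
  obtain ⟨hτadj, hτinj⟩ := hτ
  obtain ⟨P0⟩ := hS.isConnected x y
  set γ := P0.bypass with hγdef
  have hγ : γ.IsPath := P0.bypass_isPath
  set d := γ.length with hd
  have hdist : d = S.dist x y := path_length_eq_dist hS γ hγ
  have hdpos : 0 < d := by
    rcases Nat.eq_zero_or_pos d with h0 | h
    · exfalso
      apply hxy
      have := hS.isConnected.dist_eq_zero_iff.mp (by omega : S.dist x y = 0)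
      exact this
    · exact h
  -- choose linearization indices
  have hJ0 : ∀ u : V, ∃ j : ℕ, ∀ n, j ≤ n → T.dist u (τ n) = T.dist u (τ j) + (n - j) :=
    fun u => eventually_linear hT hτadj hτinj u
  choose J hJ using hJ0
  set m := max (c+1) ((Finset.range (d+1)).sup (fun i => J (q (γ.getVert i)))) with hm
  have hm1 : c + 1 ≤ m := le_max_left _ _
  have hmJ : ∀ i, i ≤ d → J (q (γ.getVert i)) ≤ m := by
    intro i hi
    have h1 : J (q (γ.getVert i)) ≤ (Finset.range (d+1)).sup (fun i => J (q (γ.getVert i))) :=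
      Finset.le_sup (f := fun i => J (q (γ.getVert i))) (Finset.mem_range.mpr (by omega))
    exact le_trans h1 (le_max_right _ _)
  have hlin : ∀ i, i ≤ d → ∀ n, m ≤ n →
      T.dist (q (γ.getVert i)) (τ n) = T.dist (q (γ.getVert i)) (τ m) + (n - m) := by
    intro i hi n hn
    have h1 := hJ (q (γ.getVert i)) n (le_trans (hmJ i hi) hn)
    have h2 := hJ (q (γ.getVert i)) m (hmJ i hi)
    have := hmJ i hi
    omega
  set b : ℕ → ℕ := fun i => T.dist (q (γ.getVert i)) (τ m) with hb
  have hb0 : b 0 = m - c := by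
    simp only [hb, γ.getVert_zero, hqx]
    exact dist_ray hT hτadj hτinj (by omega)
  have hbd : b d = m - c := by
    simp only [hb, hd]
    rw [γ.getVert_length, hqy]
    exact dist_ray hT hτadj hτinj (by omega)
  have hstep : ∀ i, i < d → b (i+1) = b i + 1 ∨ b i = b (i+1) + 1 := by
    intro i hi
    have hadj : T.Adj (q (γ.getVert i)) (q (γ.getVert (i+1))) :=
      hq _ _ (γ.adj_getVert_succ hi)
    rcases adj_dist_cases hT hadj (τ m) with h | h
    · right; exact h
    · left; exact h
  -- no interior local max
  have hnomax : ∀ i, i + 2 ≤ d → ¬(b i + 1 = b (i+1) ∧ b (i+2) + 1 = b (i+1)) := by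
    intro i h2 ⟨e1, e2⟩
    have ha1 : S.Adj (γ.getVert (i+1)) (γ.getVert i) := (γ.adj_getVert_succ (by omega)).symm
    have ha2 : S.Adj (γ.getVert (i+1)) (γ.getVert (i+2)) := by
      have := γ.adj_getVert_succ (i := i+1) (by omega)
      exact this
    have hqeq : q (γ.getVert i) = q (γ.getVert (i+2)) := by
      refine unique_closer hT (hq _ _ ha1) (hq _ _ ha2) e1.symm e2.symm
    have hne : γ.getVert i ≠ γ.getVert (i+2) := by
      intro he
      have d1 := (getVert_dist hS γ hγ i (by omega)).1
      have d2 := (getVert_dist hS γ hγ (i+2) (by omega)).1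
      rw [he] at d1
      omega
    apply hnc
    refine ⟨γ.getVert (i+1), γ.getVert i, γ.getVert (i+2), ha1, ha2, hne, hqeq, m, ?_⟩
    intro n hn
    have l1 := hlin (i+1) (by omega) n hn
    have l0 := hlin i (by omega) n hn
    have e1' : T.dist (q (γ.getVert i)) (τ m) + 1 = T.dist (q (γ.getVert (i+1))) (τ m) := e1
    omega
  -- first step goes down
  have hmax_interior : ∀ i₀, 0 < i₀ → i₀ < d → (∀ a, a ≤ d → b a ≤ b i₀) → False := by
    intro i₀ h0 hid hmax
    have s1 := hstep (i₀ - 1) (by omega)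
    have s2 := hstep i₀ (by omega)
    apply hnomax (i₀ - 1) (by omega)
    have e1 : i₀ - 1 + 1 = i₀ := by omega
    have e2 : i₀ - 1 + 2 = i₀ + 1 := by omega
    rw [e1, e2]
    have m1 := hmax (i₀ - 1) (by omega)
    have m2 := hmax (i₀ + 1) (by omega)
    rw [e1] at s1
    omega
  have hb1 : b 1 + 1 = b 0 := by
    rcases hstep 0 hdpos with h | h
    · exfalso
      have h' : b 1 = b 0 + 1 := h
      obtain ⟨i₀, hi₀mem, hi₀max⟩ :=
        (Finset.range (d+1)).exists_max_image b ⟨1, Finset.mem_range.mpr (by omega)⟩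
      have hi₀d : i₀ ≤ d := by have := Finset.mem_range.mp hi₀mem; omega
      have hmax' : ∀ a, a ≤ d → b a ≤ b i₀ := fun a ha =>
        hi₀max a (Finset.mem_range.mpr (by omega))
      have hb1big : b 0 < b i₀ := by
        have h2 := hmax' 1 (by omega); omega
      have h0i : 0 < i₀ := by
        rcases Nat.eq_zero_or_pos i₀ with rfl | h; · omega
        · exact h
      have hid : i₀ < d := by
        rcases Nat.lt_or_ge i₀ d with h | h; · exact h
        · exfalso; have : i₀ = d := by omega
          rw [this, hbd] at hb1big; omega
      exact hmax_interior i₀ h0i hid hmax'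
    · exact h.symm
  have hbd1 : b (d-1) + 1 = b d := by
    have hs := hstep (d-1) (by omega)
    have e1 : d - 1 + 1 = d := by omega
    rw [e1] at hs
    rcases hs with h | h
    · omega
    · exfalso
      obtain ⟨i₀, hi₀mem, hi₀max⟩ :=
        (Finset.range (d+1)).exists_max_image b ⟨d-1, Finset.mem_range.mpr (by omega)⟩
      have hi₀d : i₀ ≤ d := by have := Finset.mem_range.mp hi₀mem; omega
      have hmax' : ∀ a, a ≤ d → b a ≤ b i₀ := fun a ha =>
        hi₀max a (Finset.mem_range.mpr (by omega))
      have hbig : b d < b i₀ := by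
        have := hmax' (d-1) (by omega); omega
      have h0i : 0 < i₀ := by
        rcases Nat.eq_zero_or_pos i₀ with rfl | hh
        · rw [hb0] at hbig; rw [hbd] at hbig; omega
        · exact hh
      have hid : i₀ < d := by
        rcases Nat.lt_or_ge i₀ d with hh | hh; · exact hh
        · exfalso; have : i₀ = d := by omega
          rw [this] at hbig; omega
      exact hmax_interior i₀ h0i hid hmax'
  have hd2 : 2 ≤ d := by
    rcases Nat.lt_or_ge d 2 with h | h
    · exfalso
      have : d = 1 := by omega
      rw [this] at hbd1
      simp only [show (1:ℕ) - 1 = 0 from rfl] at hbd1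
      omega
    · exact h
  -- q of second vertex is τ (c+1)
  have hq1 : q (γ.getVert 1) = τ (c+1) := by
    have hadj1 : T.Adj (τ c) (q (γ.getVert 1)) := by
      have := hq _ _ (γ.adj_getVert_succ hdpos)
      rwa [γ.getVert_zero, hqx] at this
    have hadj2 : T.Adj (τ c) (τ (c+1)) := hτadj c
    have hdc : T.dist (τ c) (τ m) = T.dist (q (γ.getVert 1)) (τ m) + 1 := by
      have hb0' : T.dist (τ c) (τ m) = m - c := dist_ray hT hτadj hτinj (by omega)
      have hbb : b 1 = T.dist (q (γ.getVert 1)) (τ m) := rfl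
      omega
    have hdc2 : T.dist (τ c) (τ m) = T.dist (τ (c+1)) (τ m) + 1 := by
      have h1 : T.dist (τ c) (τ m) = m - c := dist_ray hT hτadj hτinj (by omega)
      have h2 : T.dist (τ (c+1)) (τ m) = m - (c+1) := dist_ray hT hτadj hτinj (by omega)
      omega
    exact unique_closer hT hadj1 hadj2 hdc hdc2
  have hqd1 : q (γ.getVert (d-1)) = τ (c+1) := by
    have ha : S.Adj (γ.getVert d) (γ.getVert (d-1)) := by
      have := γ.adj_getVert_succ (i := d - 1) (by omega)
      rw [show d - 1 + 1 = d by omega] at this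
      exact this.symm
    have hadj1 : T.Adj (τ c) (q (γ.getVert (d-1))) := by
      have := hq _ _ ha
      rw [hd] at this
      rw [γ.getVert_length, hqy] at this
      exact this
    have hadj2 : T.Adj (τ c) (τ (c+1)) := hτadj c
    have hdc : T.dist (τ c) (τ m) = T.dist (q (γ.getVert (d-1))) (τ m) + 1 := by
      have h1 : T.dist (τ c) (τ m) = m - c := dist_ray hT hτadj hτinj (by omega)
      have hbb : b (d-1) = T.dist (q (γ.getVert (d-1))) (τ m) := rfl
      omega
    have hdc2 : T.dist (τ c) (τ m) = T.dist (τ (c+1)) (τ m) + 1 := by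
      have h1 : T.dist (τ c) (τ m) = m - c := dist_ray hT hτadj hτinj (by omega)
      have h2 : T.dist (τ (c+1)) (τ m) = m - (c+1) := dist_ray hT hτadj hτinj (by omega)
      omega
    exact unique_closer hT hadj1 hadj2 hdc hdc2
  -- facing ray fact for the τ-direction
  have hface : ∀ cc : ℕ, ∀ n, cc + 1 ≤ n → T.dist (τ cc) (τ n) = T.dist (τ (cc+1)) (τ n) + 1 := by
    intro cc n hn
    have h1 : T.dist (τ cc) (τ n) = n - cc := dist_ray hT hτadj hτinj (by omega)
    have h2 : T.dist (τ (cc+1)) (τ n) = n - (cc+1) := dist_ray hT hτadj hτinj (by omega)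
    omega
  -- identify the lifted next steps
  have hx'eq : x' = γ.getVert 1 := by
    by_contra hne
    apply hnc
    have hadjx1 : S.Adj x (γ.getVert 1) := by
      have := γ.adj_getVert_succ hdpos
      rwa [γ.getVert_zero] at this
    refine ⟨x, x', γ.getVert 1, hxx', hadjx1, hne, by rw [hqx', hq1], c+1, ?_⟩
    intro n hn
    rw [hqx, hqx']
    exact hface c n hn
  have hy'eq : y' = γ.getVert (d-1) := by
    by_contra hne
    apply hnc
    have hadjyd : S.Adj y (γ.getVert (d-1)) := by
      have := γ.adj_getVert_succ (i := d-1) (by omega)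
      rw [show d - 1 + 1 = d by omega] at this
      have h2 : γ.getVert d = y := by rw [hd]; exact γ.getVert_length
      rw [h2] at this
      exact this.symm
    refine ⟨y, y', γ.getVert (d-1), hyy', hadjyd, hne, by rw [hqy', hqd1], c+1, ?_⟩
    intro n hn
    rw [hqy, hqy']
    exact hface c n hn
  -- final distance computation
  rw [hx'eq, hy'eq, ← hdist]
  by_cases hsame : γ.getVert 1 = γ.getVert (d-1)
  · rw [hsame, SimpleGraph.dist_self]
    omega
  · have h1mem : γ.getVert 1 ∈ γ.support :=
      Walk.mem_support_iff_exists_getVert.mpr ⟨1, rfl, by omega⟩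
    set δ := γ.dropUntil (γ.getVert 1) h1mem with hδdef
    have hδpath : δ.IsPath := hγ.dropUntil h1mem
    have hδlen : δ.length = d - 1 := by
      have h1 := path_length_eq_dist hS δ hδpath
      have h2 := (getVert_dist hS γ hγ 1 (by omega)).2
      omega
    have hsplitγ := γ.take_spec h1mem
    have hydmem : γ.getVert (d-1) ∈ δ.support := by
      have hmem : γ.getVert (d-1) ∈ γ.support :=
        Walk.mem_support_iff_exists_getVert.mpr ⟨d-1, rfl, by omega⟩
      have hsup : γ.support =
          ((γ.takeUntil (γ.getVert 1) h1mem).append (γ.dropUntil (γ.getVert 1) h1mem)).support := by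
        rw [hsplitγ]
      rw [hsup] at hmem
      rcases (Walk.mem_support_append_iff _ _).mp hmem with h | h
      · exfalso
        have hle : S.dist x (γ.getVert (d-1)) ≤ (γ.takeUntil (γ.getVert 1) h1mem).length :=
          dist_le_of_mem_support _ h
        have htl : (γ.takeUntil (γ.getVert 1) h1mem).length = 1 := by
          have := path_length_eq_dist hS _ (hγ.takeUntil h1mem)
          have h2 := (getVert_dist hS γ hγ 1 (by omega)).1
          omega
        have h3 := (getVert_dist hS γ hγ (d-1) (by omega)).1
        have hd3 : 3 ≤ d := by
          rcases Nat.lt_or_ge d 3 with hh | hh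
          · exfalso
            have he2 : d = 2 := by omega
            apply hsame
            rw [he2]
          · exact hh
        omega
      · exact h
    have hεsplit := δ.take_spec hydmem
    have hεlen : (δ.takeUntil (γ.getVert (d-1)) hydmem).length +
        (δ.dropUntil (γ.getVert (d-1)) hydmem).length = δ.length := by
      rw [← Walk.length_append, hεsplit]
    have ht : (δ.takeUntil (γ.getVert (d-1)) hydmem).length =
        S.dist (γ.getVert 1) (γ.getVert (d-1)) :=
      path_length_eq_dist hS _ (hδpath.takeUntil hydmem)
    have hdrop : (δ.dropUntil (γ.getVert (d-1)) hydmem).length = S.dist (γ.getVert (d-1)) y := by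
      exact path_length_eq_dist hS _ (hδpath.dropUntil hydmem)
    have hlast : S.dist (γ.getVert (d-1)) y = 1 := by
      have := (getVert_dist hS γ hγ (d-1) (by omega)).2
      rw [hd] at this ⊢
      omega
    omega

end Crunch

end Stmt11Aux

open Stmt11Aux SimpleGraph in
/-- Let `q : T̃ → T` be a locally surjective `G`-equivariant
morphism of trees and `E` an end of `T`, represented by a geodesic ray `τ`.
Then `q⁻¹(E)` — the set of ends of `T̃` represented by lifts of rays
representing `E` — is a singleton if and only if no collapsing pair faces `E`. -/
theorem stmt11 {W V : Type*} (S : SimpleGraph W) (T : SimpleGraph V)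
    (hS : S.IsTree) (hT : T.IsTree)
    (G : Type*) [Group G] [MulAction G W] [MulAction G V]
    (hactS : ∀ (g : G) (x y : W), S.Adj x y → S.Adj (g • x) (g • y))
    (hactT : ∀ (g : G) (x y : V), T.Adj x y → T.Adj (g • x) (g • y))
    (q : W → V) (hq : ∀ a b : W, S.Adj a b → T.Adj (q a) (q b))
    (hequiv : ∀ (g : G) (w : W), q (g • w) = g • q w)
    (hlocsurj : ∀ (w : W) (v' : V), T.Adj (q w) v' → ∃ w' : W, S.Adj w w' ∧ q w' = v')
    (τ : ℕ → V) (hτ : IsGeodRay T τ) :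
    ((∃ σ : ℕ → W, IsLiftOfEnd S T q τ σ) ∧
        ∀ σ₁ σ₂ : ℕ → W, IsLiftOfEnd S T q τ σ₁ → IsLiftOfEnd S T q τ σ₂ →
          RayEquiv σ₁ σ₂) ↔
      ¬ CollapsingPairFacesRay S T q τ := by
  classical
  constructor
  · -- a collapsing pair facing the end yields two non-equivalent lifts
    rintro ⟨-, huniq⟩ hcp
    obtain ⟨p, w₁, w₂, hpw₁, hpw₂, hw12, hq12, N, hface⟩ := hcp
    obtain ⟨j₁, hj₁⟩ := eventually_linear hT hτ.1 hτ.2 (q w₁)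
    set M := max N j₁ with hM
    have hMN : N ≤ M := le_max_left _ _
    have hMj : j₁ ≤ M := le_max_right _ _
    have linM : ∀ n, M ≤ n → T.dist (q w₁) (τ n) = T.dist (q w₁) (τ M) + (n - M) := by
      intro n hn
      have h1 := hj₁ n (by omega)
      have h2 := hj₁ M hMj
      omega
    obtain ⟨P0⟩ := hT.isConnected (q w₁) (τ M)
    set P₁ := P0.bypass with hP₁def
    have hP₁path : P₁.IsPath := P0.bypass_isPath
    set d₀ := P₁.length with hd₀
    have hd₀dist : d₀ = T.dist (q w₁) (τ M) := path_length_eq_dist hT P₁ hP₁path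
    set ρ : ℕ → V := fun k => if k < d₀ then P₁.getVert k else τ (M + (k - d₀)) with hρdef
    have hρlt : ∀ k, k < d₀ → ρ k = P₁.getVert k := fun k hk => if_pos hk
    have hρge : ∀ k, d₀ ≤ k → ρ k = τ (M + (k - d₀)) := fun k hk => if_neg (by omega)
    have hρ0 : ρ 0 = q w₁ := by
      rcases Nat.eq_zero_or_pos d₀ with h0 | hp0
      · rw [hρge 0 (by omega)]
        have h2 : P₁.getVert 0 = τ M := P₁.getVert_of_length_le (by omega)
        rw [P₁.getVert_zero] at h2
        rw [show M + (0 - d₀) = M by omega]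
        exact h2.symm
      · rw [hρlt 0 hp0, P₁.getVert_zero]
    have hρadj : ∀ k, T.Adj (ρ k) (ρ (k+1)) := by
      intro k
      rcases Nat.lt_trichotomy (k+1) d₀ with h | h | h
      · rw [hρlt k (by omega), hρlt (k+1) h]
        exact P₁.adj_getVert_succ (by omega)
      · rw [hρlt k (by omega), hρge (k+1) (by omega)]
        have h2 : P₁.getVert (k+1) = τ M := P₁.getVert_of_length_le (by omega)
        have h3 := P₁.adj_getVert_succ (show k < P₁.length by omega)
        rw [h2] at h3
        rw [show M + (k+1-d₀) = M by omega]
        exact h3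
      · rw [hρge k (by omega), hρge (k+1) (by omega)]
        rw [show M + (k+1-d₀) = (M + (k-d₀)) + 1 by omega]
        exact hτ.1 (M + (k-d₀))
    have distρ : ∀ k, T.dist (q w₁) (ρ k) = k := by
      intro k
      by_cases hk : k < d₀
      · rw [hρlt k hk]
        exact (getVert_dist hT P₁ hP₁path k (by omega)).1
      · rw [hρge k (by omega)]
        have h3 := linM (M + (k - d₀)) (by omega)
        omega
    have dist2ρ : ∀ k, ∃ n, N ≤ n ∧ M ≤ n ∧ T.dist (q w₁) (τ n) = k + T.dist (ρ k) (τ n) := by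
      intro k
      refine ⟨max N (M + k), le_max_left _ _, by omega, ?_⟩
      set n := max N (M+k) with hn
      have hnM : M + k ≤ n := le_max_right _ _
      by_cases hk : k < d₀
      · have h1 : T.dist (ρ k) (τ M) = d₀ - k := by
          rw [hρlt k hk]
          exact (getVert_dist hT P₁ hP₁path k (by omega)).2
        have h2 : T.dist (ρ k) (τ n) ≤ T.dist (ρ k) (τ M) + T.dist (τ M) (τ n) :=
          hT.isConnected.dist_triangle
        have h3 : T.dist (τ M) (τ n) = n - M := dist_ray hT hτ.1 hτ.2 (by omega)
        have h4 : T.dist (q w₁) (τ n) ≤ T.dist (q w₁) (ρ k) + T.dist (ρ k) (τ n) :=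
          hT.isConnected.dist_triangle
        have h5 := distρ k
        have h6 := linM n (by omega)
        omega
      · have h1 : T.dist (ρ k) (τ n) = n - (M + (k - d₀)) := by
          rw [hρge k (by omega)]
          exact dist_ray hT hτ.1 hτ.2 (by omega)
        have h6 := linM n (by omega)
        omega
    have distU : ∀ k, T.dist (q p) (ρ k) = k + 1 := by
      intro k
      have h1 : T.dist (q p) (ρ k) ≤ T.dist (q p) (q w₁) + T.dist (q w₁) (ρ k) :=
        hT.isConnected.dist_triangle
      have h2 : T.dist (q p) (q w₁) = 1 := SimpleGraph.dist_eq_one_iff_adj.mpr (hq p w₁ hpw₁)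
      have h3 := distρ k
      obtain ⟨n, hnN, hnM, heq⟩ := dist2ρ k
      have hf := hface n hnN
      have htri : T.dist (q p) (τ n) ≤ T.dist (q p) (ρ k) + T.dist (ρ k) (τ n) :=
        hT.isConnected.dist_triangle
      omega
    -- the common projected ray
    set rseq : ℕ → V := fun k => Nat.rec (q p) (fun k _ => ρ k) k with hrseq
    have hrseq0 : rseq 0 = q p := rfl
    have hrseqS : ∀ k, rseq (k+1) = ρ k := fun k => rfl
    have hrdist : ∀ k, T.dist (q p) (rseq k) = k := by
      intro k
      cases k with
      | zero => exact SimpleGraph.dist_self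
      | succ k => exact distU k
    have hrinj : Function.Injective rseq := by
      intro a bb h
      have h2 := congrArg (T.dist (q p)) h
      rw [hrdist a, hrdist bb] at h2
      exact h2
    have hradj : ∀ k, T.Adj (rseq k) (rseq (k+1)) := by
      intro k
      cases k with
      | zero =>
        show T.Adj (q p) (ρ 0)
        rw [hρ0]
        exact hq p w₁ hpw₁
      | succ k => exact hρadj k
    -- construct a lift through any neighbour of p over ρ 0
    have key : ∀ (w0 : W), S.Adj p w0 → q w0 = ρ 0 →
        ∃ σ : ℕ → W, σ 1 = w0 ∧ σ 0 = p ∧ (∀ k, q (σ k) = rseq k) ∧ IsLiftOfEnd S T q τ σ := by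
      intro w0 hpw0 hw0
      set lift := liftRay (S := S) (q := q) hlocsurj hρadj hw0 with hliftdef
      refine ⟨fun k => Nat.rec p (fun k _ => (lift k).1) k, rfl, rfl, ?_, ?_⟩
      · intro k
        cases k with
        | zero => rfl
        | succ k => exact (lift k).2
      · set σ : ℕ → W := fun k => Nat.rec p (fun k _ => (lift k).1) k with hσdef
        have hqσ : ∀ k, q (σ k) = rseq k := by
          intro k
          cases k with
          | zero => rfl
          | succ k => exact (lift k).2
        have hσadj : ∀ n, S.Adj (σ n) (σ (n+1)) := by
          intro n
          cases n with
          | zero =>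
            show S.Adj p (lift 0).1
            rw [liftRay_zero]
            exact hpw0
          | succ n => exact liftRay_adj hlocsurj hρadj hw0 n
        have hσinj : Function.Injective σ := by
          intro a bb h
          apply hrinj
          rw [← hqσ a, ← hqσ bb, h]
        have hfun : (fun n => q (σ n)) = rseq := funext hqσ
        refine ⟨⟨hσadj, hσinj⟩, ?_, ?_⟩
        · rw [hfun]
          exact ⟨hradj, hrinj⟩
        · refine ⟨1 + d₀, M, fun n => ?_⟩
          show q (σ (1 + d₀ + n)) = τ (M + n)
          rw [hqσ (1 + d₀ + n)]
          have he : 1 + d₀ + n = (d₀ + n) + 1 := by omega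
          rw [he, hrseqS (d₀ + n), hρge (d₀ + n) (by omega),
            show M + (d₀ + n - d₀) = M + n by omega]
    obtain ⟨σ₁, hσ₁1, hσ₁0, hqσ₁, hlift₁⟩ := key w₁ hpw₁ hρ0.symm
    obtain ⟨σ₂, hσ₂1, hσ₂0, hqσ₂, hlift₂⟩ := key w₂ hpw₂ (by rw [← hq12]; exact hρ0.symm)
    obtain ⟨k, l, hkl⟩ := huniq σ₁ σ₂ hlift₁ hlift₂
    have hkeqq : k = l := by
      have h0 := hkl 0
      have h2 := congrArg q h0
      rw [hqσ₁, hqσ₂] at h2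
      have h3 := hrinj h2
      omega
    subst hkeqq
    rcases Nat.eq_zero_or_pos k with rfl | hkpos
    · apply hw12
      rw [← hσ₁1, ← hσ₂1]
      exact hkl 1
    · have hadjσ₁ : ∀ n, S.Adj (σ₁ n) (σ₁ (n+1)) := hlift₁.1.1
      have hadjσ₂ : ∀ n, S.Adj (σ₂ n) (σ₂ (n+1)) := hlift₂.1.1
      have hinjσ₁ : Function.Injective σ₁ := hlift₁.1.2
      have hinjσ₂ : Function.Injective σ₂ := hlift₂.1.2
      have hend : σ₂ (0+k) = σ₁ (0+k) := by
        rw [show (0:ℕ)+k = k by omega]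
        exact (hkl 0).symm
      have hstart : σ₂ 0 = σ₁ 0 := by rw [hσ₂0, hσ₁0]
      set Wk₁ := walkTo σ₁ hadjσ₁ 0 k with hWk₁
      set Wk₂ := (walkTo σ₂ hadjσ₂ 0 k).copy hstart hend with hWk₂
      have hp₁ : Wk₁.IsPath := isPath_walkTo σ₁ hadjσ₁ hinjσ₁ 0 k
      have hp₂ : Wk₂.IsPath := (Walk.isPath_copy _ _ _).mpr (isPath_walkTo σ₂ hadjσ₂ hinjσ₂ 0 k)
      have heqw : Wk₁ = Wk₂ := (hS.existsUnique_path (σ₁ 0) (σ₁ (0+k))).unique hp₁ hp₂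
      have hsup := congrArg Walk.support heqw
      rw [hWk₁, hWk₂, Walk.support_copy, support_walkTo, support_walkTo] at hsup
      have h1lt : 1 < k + 1 := by omega
      have e1 : ((List.range (k+1)).map (fun i => σ₁ (0+i)))[1]? = some (σ₁ (0+1)) := by
        rw [List.getElem?_map, List.getElem?_range h1lt]
        rfl
      have e2 : ((List.range (k+1)).map (fun i => σ₂ (0+i)))[1]? = some (σ₂ (0+1)) := by
        rw [List.getElem?_map, List.getElem?_range h1lt]
        rfl
      rw [hsup] at e1
      rw [e2] at e1
      have h1 : σ₂ (0+1) = σ₁ (0+1) := Option.some.inj e1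
      apply hw12
      rw [← hσ₁1, ← hσ₂1]
      exact h1.symm
  · -- no collapsing pair: existence and uniqueness of the lift
    intro hnc
    constructor
    · -- existence
      have hsurj : ∃ w0 : W, q w0 = τ 0 := by
        obtain ⟨wa⟩ := hS.isConnected.nonempty
        obtain ⟨P⟩ := hT.isConnected (q wa) (τ 0)
        have haux : ∀ (u vv : V) (P : T.Walk u vv) (w : W), q w = u → ∃ w', q w' = vv := by
          intro u vv P
          induction P with
          | nil => exact fun w h => ⟨w, h⟩
          | cons hadj pp ih =>
            intro w hw
            obtain ⟨w', _, hw'⟩ := hlocsurj w _ (by rw [hw]; exact hadj)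
            exact ih w' hw'
        exact haux _ _ P wa rfl
      obtain ⟨w0, hw0⟩ := hsurj
      set lift := liftRay (S := S) (q := q) hlocsurj hτ.1 hw0 with hliftdef
      set σ : ℕ → W := fun n => (lift n).1 with hσdef
      have hqσ : ∀ n, q (σ n) = τ n := fun n => (lift n).2
      have hfun : (fun n => q (σ n)) = τ := funext hqσ
      refine ⟨σ, ⟨fun n => liftRay_adj hlocsurj hτ.1 hw0 n, ?_⟩, ?_, 0, 0, fun n => ?_⟩
      · intro a bb h
        apply hτ.2
        rw [← hqσ a, ← hqσ bb, h]
      · rw [hfun]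
        exact hτ
      · show q (σ (0 + n)) = τ (0 + n)
        rw [hqσ]
    · -- uniqueness
      intro σ₁ σ₂ h₁ h₂
      obtain ⟨⟨hadj₁, hinj₁⟩, hgeod₁, k₁, l₁, H₁⟩ := h₁
      obtain ⟨⟨hadj₂, hinj₂⟩, hgeod₂, k₂, l₂, H₂⟩ := h₂
      set L := max l₁ l₂ with hL
      have hl₁L : l₁ ≤ L := le_max_left _ _
      have hl₂L : l₂ ≤ L := le_max_right _ _
      set a₁ := k₁ + (L - l₁) with ha₁
      set a₂ := k₂ + (L - l₂) with ha₂
      have hρ₁ : ∀ n, q (σ₁ (a₁ + n)) = τ (L + n) := by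
        intro n
        have h' : q (σ₁ (k₁ + ((L - l₁) + n))) = τ (l₁ + ((L - l₁) + n)) := H₁ _
        rw [show k₁ + ((L - l₁) + n) = a₁ + n by omega,
          show l₁ + ((L - l₁) + n) = L + n by omega] at h'
        exact h'
      have hρ₂ : ∀ n, q (σ₂ (a₂ + n)) = τ (L + n) := by
        intro n
        have h' : q (σ₂ (k₂ + ((L - l₂) + n))) = τ (l₂ + ((L - l₂) + n)) := H₂ _
        rw [show k₂ + ((L - l₂) + n) = a₂ + n by omega,
          show l₂ + ((L - l₂) + n) = L + n by omega] at h'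
        exact h'
      have hstepd : ∀ n, σ₁ (a₁+n) ≠ σ₂ (a₂+n) →
          S.dist (σ₁ (a₁+(n+1))) (σ₂ (a₂+(n+1))) + 2 ≤ S.dist (σ₁ (a₁+n)) (σ₂ (a₂+n)) := by
        intro n hne
        exact crunch hS hT hq hτ hnc (c := L+n) hne (hρ₁ n) (hρ₂ n)
          (hadj₁ (a₁+n)) (hadj₂ (a₂+n)) (hρ₁ (n+1)) (hρ₂ (n+1))
      have merge : ∀ D n, S.dist (σ₁ (a₁+n)) (σ₂ (a₂+n)) ≤ D →
          ∃ N, σ₁ (a₁+N) = σ₂ (a₂+N) := by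
        intro D
        induction D with
        | zero =>
          intro n h
          by_cases he : σ₁ (a₁+n) = σ₂ (a₂+n)
          · exact ⟨n, he⟩
          · exfalso
            have := hstepd n he
            omega
        | succ D ih =>
          intro n h
          by_cases he : σ₁ (a₁+n) = σ₂ (a₂+n)
          · exact ⟨n, he⟩
          · exact ih (n+1) (by have := hstepd n he; omega)
      obtain ⟨N, hN⟩ := merge _ 0 le_rfl
      have prop : ∀ n, σ₁ (a₁ + (N + n)) = σ₂ (a₂ + (N + n)) := by
        intro n
        induction n with
        | zero => exact hN
        | succ n ihn =>
          by_contra hne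
          apply hnc
          refine ⟨σ₁ (a₁ + (N+n)), σ₁ (a₁ + (N+n) + 1), σ₂ (a₂ + (N+n) + 1),
            hadj₁ _, ?_, ?_, ?_, L + (N+n) + 1, ?_⟩
          · rw [ihn]
            exact hadj₂ _
          · exact hne
          · exact (hρ₁ (N+n+1)).trans (hρ₂ (N+n+1)).symm
          · intro nn hnn
            have e0 : q (σ₁ (a₁ + (N+n))) = τ (L+(N+n)) := hρ₁ (N+n)
            have e1 : q (σ₁ (a₁ + (N+n) + 1)) = τ (L+(N+n)+1) := hρ₁ (N+n+1)
            rw [e0, e1]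
            have d1 := dist_ray hT hτ.1 hτ.2 (show L+(N+n) ≤ nn by omega)
            have d2 := dist_ray hT hτ.1 hτ.2 (show L+(N+n)+1 ≤ nn from hnn)
            omega
      refine ⟨a₁ + N, a₂ + N, fun n => ?_⟩
      have h3 := prop n
      rw [show a₁ + N + n = a₁ + (N + n) by omega, show a₂ + N + n = a₂ + (N + n) by omega]
      exact h3
end
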